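/- arXiv:2012.14947 — 4 statements merged into one kernel-verified Lean document; each statement's English description precedes it below -/
import Mathlib

section
/- Fix k ≥ 2, 0 ≤ a ≤ k-1, and 1 ≤ r ≤ k-1. For all n ≥ 0 and 0 ≤ m ≤ n, the number of generalized (k,r)-Fine paths of depth a, semilength n, and semiheight m equals the number of (α,β)-colored order-(k-1) Motzkin paths of length n and height m, where α_i = C(k,i+1) - C(k-a-1,i+1) - C(k-r-1,i) and β_i = C(k,i+1) for 0 ≤ i ≤ k-2. -/
open Finset PowerSeries

/-- The validity condition for a single step `(s, c)` (vertical displacement `s`, color `c`)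
of an `(α,β)`-colored order-`ℓ` Motzkin path, where `h` is the height at which the step ends.
Up steps `s = 1` and maximal down steps `D_ℓ` are uncolored (color `0`); a down step
`D_d = (1,-d)` with `d < ℓ` gets one of `α d` colors if it ends at height `0` and one of
`β d` colors if it ends at positive height. -/
def MotzkinStepOK (ℓ : ℕ) (α β : ℕ → ℕ) (s : ℤ) (c : ℕ) (h : ℤ) : Prop :=
  (s = 1 ∧ c = 0) ∨
  ∃ d : ℕ, d ≤ ℓ ∧ s = -(d : ℤ) ∧
    (if d = ℓ then c = 0 else c < (if h = 0 then α d else β d))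

/-- The set of `(α,β)`-colored order-`ℓ` Motzkin paths of length `n` and height `m`,
encoded as lists of (displacement, color) pairs.  The path stays weakly above `y = 0`. -/
def ColoredMotzkinSet (ℓ : ℕ) (α β : ℕ → ℕ) (n m : ℕ) : Set (List (ℤ × ℕ)) :=
  {L | L.length = n ∧ (L.map Prod.fst).sum = (m : ℤ) ∧
    ∀ i < n, 0 ≤ ((L.take (i + 1)).map Prod.fst).sum ∧
      MotzkinStepOK ℓ α β (L.getD i (0, 0)).1 (L.getD i (0, 0)).2
        (((L.take (i + 1)).map Prod.fst).sum)}

/-- `M ℓ α β n m` is the number of `(α,β)`-colored order-`ℓ` Motzkin paths of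
length `n` and height `m`. -/
noncomputable def M (ℓ : ℕ) (α β : ℕ → ℕ) (n m : ℕ) : ℕ :=
  Nat.card (ColoredMotzkinSet ℓ α β n m)

/-- The set of generalized `k`-Dyck paths of depth `a`, semilength `n` and semiheight `m`:
lattice paths from `(0,0)` to `(k*n, k*m)` using steps `U = (1,1)` and `D_{k-1} = (1,1-k)`
that stay weakly above the line `y = -a`, encoded as lists of vertical displacements. -/
def DyckSet (k a n m : ℕ) : Set (List ℤ) :=
  {L | L.length = k * n ∧ L.sum = (k : ℤ) * m ∧
    (∀ s ∈ L, s = 1 ∨ s = 1 - (k : ℤ)) ∧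
    ∀ i, -(a : ℤ) ≤ (L.take i).sum}

/-- `D k a n m` is the number of generalized `k`-Dyck paths of depth `a`,
semilength `n` and semiheight `m`. -/
noncomputable def D (k a n m : ℕ) : ℕ := Nat.card (DyckSet k a n m)

/-- `HasHill k r L` holds when the path `L` contains a subpath `U^r D_{k-1}`
(`r` consecutive up steps followed by one maximal down step) ending at height `0`. -/
def HasHill (k r : ℕ) (L : List ℤ) : Prop :=
  ∃ i, i + r < L.length ∧ (∀ j < r, L.getD (i + j) 0 = 1) ∧
    L.getD (i + r) 0 = 1 - (k : ℤ) ∧ (L.take (i + r + 1)).sum = 0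

/-- `F k a r n m` is the number of generalized `(k,r)`-Fine paths of depth `a`,
semilength `n` and semiheight `m`: generalized `k`-Dyck paths with no subpath
`U^r D_{k-1}` ending at height `0`. -/
noncomputable def F (k a r n m : ℕ) : ℕ :=
  Nat.card {L | L ∈ DyckSet k a n m ∧ ¬ HasHill k r L}

namespace FineAux

open scoped Classical

/-! ### generic helpers -/

theorem sigma_subtype_ext {ι : Type*} {X : Type*} {P : ι → X → Prop} {i j : ι}
    (hij : i = j) {x : {v : X // P i v}} {y : {v : X // P j v}} (hxy : (x : X) = (y : X)) :
    (⟨i, x⟩ : Σ t, {v : X // P t v}) = ⟨j, y⟩ := by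
  subst hij; exact congrArg _ (Subtype.ext hxy)

theorem nonempty_sigma_prod_congr {ι : Type*} {A A' B B' : ι → Type*}
    (hA : ∀ i, Nonempty (A i ≃ A' i))
    (hB : ∀ i, Nonempty (A i) → Nonempty (B i ≃ B' i)) :
    Nonempty ((Σ i, A i × B i) ≃ Σ i, A' i × B' i) := by
  constructor
  refine Equiv.sigmaCongrRight fun i => ?_
  by_cases h : Nonempty (A i)
  · exact Equiv.prodCongr (hA i).some ((hB i h).some)
  · have e := (hA i).some
    have h1 : IsEmpty (A i) := not_nonempty_iff.mp h
    have h2 : IsEmpty (A' i) := ⟨fun x => h ⟨e.symm x⟩⟩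
    exact Equiv.equivOfIsEmpty _ _

theorem getD_take' {α : Type*} (l : List α) (d : α) {n i : ℕ} (h : i < n) :
    (l.take n).getD i d = l.getD i d := by
  rw [List.getD_eq_getElem?_getD, List.getD_eq_getElem?_getD, List.getElem?_take, if_pos h]

theorem getD_drop' {α : Type*} (l : List α) (d : α) (n i : ℕ) :
    (l.drop n).getD i d = l.getD (n + i) d := by
  rw [List.getD_eq_getElem?_getD, List.getD_eq_getElem?_getD, List.getElem?_drop]

theorem list_take_getD {α : Type*} {n : ℕ} {L : List α} (hL : L.length = n + 1) (d : α) :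
    L.take n ++ [L.getD n d] = L := by
  have h1 : n < L.length := by omega
  rw [List.getD_eq_getElem L d h1, ← List.concat_eq_append, List.take_concat_get, ← hL,
    List.take_length]

theorem sum_map_range {G : Type*} [AddCommMonoid G] (f : ℕ → G) (n : ℕ) :
    ((List.range n).map f).sum = ∑ i ∈ Finset.range n, f i := by
  induction n with
  | zero => simp
  | succ n ih =>
      rw [List.range_succ, Finset.sum_range_succ, List.map_append, List.sum_append, ih]; simp

theorem sum_eq_length_sub (k : ℕ) (hk : 2 ≤ k) :
    ∀ (l : List ℤ), (∀ s ∈ l, s = 1 ∨ s = 1 - (k : ℤ)) →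
      l.sum = l.length - k * l.count (1 - (k : ℤ)) := by
  intro l
  induction l with
  | nil => simp
  | cons x t ih =>
      intro hmem
      have hx := hmem x (by simp)
      have ht := ih (fun s hs => hmem s (by simp [hs]))
      rw [List.sum_cons, List.count_cons, ht]
      rcases hx with hx | hx
      · subst hx
        have hne : ((1:ℤ) == 1 - (k:ℤ)) = false := beq_eq_false_iff_ne.mpr (by omega)
        simp only [hne, List.length_cons, if_neg (by simp : ¬ (false = true))]
        push_cast; ring
      · subst hx
        simp only [beq_self_eq_true, List.length_cons, if_pos rfl]
        push_cast; ring

/-! ### main definitions -/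

variable (k a r : ℕ)

def fs (n : ℕ) (h : ℤ) : Set (List ℤ) :=
  {L | L.length = k * n ∧ L.sum = h ∧ (∀ s ∈ L, s = 1 ∨ s = 1 - (k : ℤ)) ∧
    (∀ i, -(a : ℤ) ≤ (L.take i).sum) ∧ ¬ HasHill k r L}

def af : ℕ → ℕ := fun i => k.choose (i + 1) - (k - a - 1).choose (i + 1) - (k - r - 1).choose i
def bf : ℕ → ℕ := fun i => k.choose (i + 1)

def ms (n : ℕ) (h : ℤ) : Set (List (ℤ × ℕ)) :=
  {L | L.length = n ∧ (L.map Prod.fst).sum = h ∧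
    ∀ i < n, 0 ≤ ((L.take (i + 1)).map Prod.fst).sum ∧
      MotzkinStepOK (k - 1) (af k a r) (bf k) (L.getD i (0, 0)).1 (L.getD i (0, 0)).2
        (((L.take (i + 1)).map Prod.fst).sum)}

def BlockHill (b : List ℤ) (h : ℤ) : Prop :=
  h = 0 ∧ b.getD (k - 1) 0 = 1 - (k : ℤ) ∧ ∀ t < r, b.getD (k - 1 - r + t) 0 = 1

def DBlock (j : ℕ) (h : ℤ) : Set (List ℤ) :=
  {b | b.length = k ∧ (∀ s ∈ b, s = 1 ∨ s = 1 - (k : ℤ)) ∧ b.count (1 - (k : ℤ)) = j ∧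
    (∀ t, -(a : ℤ) ≤ (k : ℤ) * (h - 1 + j) + (b.take t).sum) ∧ ¬ BlockHill k r b h}

def MStep (j : ℕ) (h : ℤ) : Set (ℤ × ℕ) :=
  {p | 0 ≤ h ∧ p.1 = 1 - (j : ℤ) ∧ MotzkinStepOK (k - 1) (af k a r) (bf k) p.1 p.2 h}

def cc (j : ℕ) (h : ℤ) : ℕ :=
  if h = 0 ∧ j ≠ 0 then k.choose j - (k - a - 1).choose j - (k - r - 1).choose (j - 1)
  else k.choose j

/-! ### emptiness lemmas -/

theorem fs_nonneg (hk : 2 ≤ k) (ha : a ≤ k - 1) {n : ℕ} {h : ℤ} {L : List ℤ}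
    (hL : L ∈ fs k a r n h) : 0 ≤ h := by
  obtain ⟨hlen, hsum, hmem, hdepth, -⟩ := hL
  have h1 : -(a:ℤ) ≤ L.sum := by
    have := hdepth L.length
    rwa [List.take_length] at this
  have h2 : L.sum = (L.length : ℤ) - k * L.count (1 - (k:ℤ)) := sum_eq_length_sub k hk L hmem
  set c := L.count (1 - (k:ℤ)) with hc
  rw [hsum] at h1 h2
  rw [hlen] at h2
  have hak : (a : ℤ) ≤ (k : ℤ) - 1 := by omega
  rcases le_or_gt (c : ℤ) (n : ℤ) with hle | hlt
  · have : (0:ℤ) ≤ (k:ℤ) * ((n:ℤ) - (c:ℤ)) := mul_nonneg (by positivity) (by omega)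
    have e : (k:ℤ) * ((n:ℤ) - (c:ℤ)) = ((k * n : ℕ) : ℤ) - (k:ℤ) * c := by push_cast; ring
    omega
  · exfalso
    have : (k:ℤ) * ((n:ℤ) + 1) ≤ (k:ℤ) * (c:ℤ) := by
      apply mul_le_mul_of_nonneg_left (by omega) (by positivity)
    have e : ((k * n : ℕ) : ℤ) = (k:ℤ) * (n:ℤ) := by push_cast; ring
    have hk' : (2:ℤ) ≤ (k:ℤ) := by exact_mod_cast hk
    nlinarith

theorem ms_nonneg {n : ℕ} {h : ℤ} {L : List (ℤ × ℕ)} (hL : L ∈ ms k a r n h) : 0 ≤ h := by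
  obtain ⟨hlen, hsum, hcond⟩ := hL
  cases n with
  | zero =>
      have : L = [] := List.eq_nil_of_length_eq_zero hlen
      subst this
      simp only [List.map_nil, List.sum_nil] at hsum
      omega
  | succ n =>
      have h1 := (hcond n (by omega)).1
      rw [List.take_of_length_le (by omega), hsum] at h1
      exact h1

/-! ### Motzkin decomposition -/

theorem ms_peel (hk : 2 ≤ k) {n : ℕ} {h : ℤ} {L : List (ℤ × ℕ)}
    (hL : L ∈ ms k a r (n + 1) h) :
    (1 - (L.getD n (0, 0)).1).toNat ≤ k ∧
    L.take n ∈ ms k a r n (h - 1 + ((1 - (L.getD n (0, 0)).1).toNat : ℕ)) ∧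
    L.getD n (0, 0) ∈ MStep k a r ((1 - (L.getD n (0, 0)).1).toNat) h := by
  obtain ⟨hlen, hsum, hcond⟩ := hL
  set x := L.getD n (0, 0) with hx
  have hc := hcond n (by omega)
  rw [List.take_of_length_le (by omega), hsum] at hc
  have hc1 : 0 ≤ h := hc.1
  have hcStep := hc.2
  have hrange : 0 ≤ 1 - x.1 ∧ (1 - x.1).toNat ≤ k := by
    rcases hcStep with ⟨h1, -⟩ | ⟨d, hd, hsx, -⟩
    · rw [h1]; omega
    · rw [hsx]; omega
  set j := (1 - x.1).toNat with hj
  have hxj : x.1 = 1 - (j : ℤ) := by omega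
  refine ⟨hrange.2, ?_, ⟨hc1, hxj, hcStep⟩⟩
  have hdec : L.take n ++ [x] = L := list_take_getD hlen _
  refine ⟨by simp [hlen], ?_, ?_⟩
  · have : ((L.take n).map Prod.fst).sum + x.1 = h := by
      conv_rhs => rw [← hsum, ← hdec]
      rw [List.map_append, List.sum_append]
      simp
    omega
  · intro i hi
    have htt : (L.take n).take (i+1) = L.take (i+1) := by
      rw [List.take_take, min_eq_left (by omega)]
    have hgd : (L.take n).getD i (0,0) = L.getD i (0,0) := getD_take' L (0,0) hi
    rw [htt, hgd]
    exact hcond i (by omega)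

theorem ms_glue (hk : 2 ≤ k) {n : ℕ} {h : ℤ} {j : ℕ} (hj : j ≤ k)
    {P : List (ℤ × ℕ)} {x : ℤ × ℕ}
    (hP : P ∈ ms k a r n (h - 1 + (j : ℕ))) (hx : x ∈ MStep k a r j h) :
    P ++ [x] ∈ ms k a r (n + 1) h := by
  obtain ⟨hPlen, hPsum, hPcond⟩ := hP
  obtain ⟨h0, hx1, hxOK⟩ := hx
  have hlen : (P ++ [x]).length = n + 1 := by simp [hPlen]
  have hsum : ((P ++ [x]).map Prod.fst).sum = h := by
    rw [List.map_append, List.sum_append, hPsum]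
    simp only [List.map_cons, List.map_nil, List.sum_cons, List.sum_nil, hx1]
    ring
  refine ⟨hlen, hsum, ?_⟩
  intro i hi
  rcases lt_or_ge i n with hin | hin
  · have htt : (P ++ [x]).take (i+1) = P.take (i+1) :=
      List.take_append_of_le_length (by omega)
    have hgd : (P ++ [x]).getD i (0,0) = P.getD i (0,0) := List.getD_append _ _ _ _ (by omega)
    rw [htt, hgd]
    exact hPcond i hin
  · have hieq : i = n := by omega
    subst hieq
    have htt : (P ++ [x]).take (i+1) = P ++ [x] := List.take_of_length_le (by omega)
    have hgd : (P ++ [x]).getD i (0,0) = x := by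
      rw [List.getD_append_right _ _ _ _ (le_of_eq hPlen)]
      simp [hPlen]
    rw [htt, hgd, hsum]
    exact ⟨h0, hxOK⟩

noncomputable def E2 (hk : 2 ≤ k) (n : ℕ) (h : ℤ) :
    ↥(ms k a r (n + 1) h) ≃
      Σ t : Fin (k + 1), {pr : List (ℤ × ℕ) × (ℤ × ℕ) //
        pr.1 ∈ ms k a r n (h - 1 + ((t : ℕ) : ℤ)) ∧ pr.2 ∈ MStep k a r (t : ℕ) h} where
  toFun L := ⟨⟨(1 - ((L : List (ℤ × ℕ)).getD n (0, 0)).1).toNat,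
      Nat.lt_succ_of_le (ms_peel k a r hk L.2).1⟩,
    ⟨((L : List (ℤ × ℕ)).take n, (L : List (ℤ × ℕ)).getD n (0, 0)),
      (ms_peel k a r hk L.2).2.1, (ms_peel k a r hk L.2).2.2⟩⟩
  invFun s := ⟨s.2.val.1 ++ [s.2.val.2],
    ms_glue k a r hk (Nat.lt_succ_iff.mp s.1.2) s.2.2.1 s.2.2.2⟩
  left_inv L := Subtype.ext (list_take_getD L.2.1 (0, 0))
  right_inv := by
    rintro ⟨t, ⟨⟨P, x⟩, hP, hx⟩⟩
    have hlen : P.length = n := hP.1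
    have hgd : (P ++ [x]).getD n (0, 0) = x := by
      rw [List.getD_append_right _ _ _ _ (le_of_eq hlen)]
      simp [hlen]
    dsimp only
    refine sigma_subtype_ext (P := fun (t : Fin (k+1)) (pr : List (ℤ × ℕ) × (ℤ × ℕ)) =>
      pr.1 ∈ ms k a r n (h - 1 + ((t : ℕ) : ℤ)) ∧ pr.2 ∈ MStep k a r (t : ℕ) h) ?_ ?_
    · apply Fin.ext
      show (1 - ((P ++ [x]).getD n (0, 0)).1).toNat = (t : ℕ)
      rw [hgd, hx.2.1]
      omega
    · simp only [hgd]
      exact congrArg (fun z => (z, x)) (List.take_left' hlen)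


theorem hill_pos_mult (hk : 2 ≤ k) {L : List ℤ} (hmem : ∀ s ∈ L, s = 1 ∨ s = 1 - (k : ℤ))
    {p : ℕ} (hp : p < L.length) (hsum : (L.take (p+1)).sum = 0) : ∃ c, p + 1 = k * c := by
  have hsub : ∀ s ∈ L.take (p+1), s = 1 ∨ s = 1 - (k : ℤ) :=
    fun s hs => hmem s (List.take_subset _ _ hs)
  have := sum_eq_length_sub k hk _ hsub
  rw [hsum, List.length_take, min_eq_left (by omega)] at this
  refine ⟨(L.take (p+1)).count (1 - (k:ℤ)), ?_⟩
  have : ((p+1 : ℕ) : ℤ) = ((k * (L.take (p+1)).count (1 - (k:ℤ)) : ℕ) : ℤ) := by push_cast; omega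
  exact_mod_cast this

/-! ### Fine decomposition -/

theorem fs_peel (hk : 2 ≤ k) (ha : a ≤ k - 1) (hr1 : 1 ≤ r) (hr2 : r ≤ k - 1)
    {n : ℕ} {h : ℤ} {L : List ℤ} (hL : L ∈ fs k a r (n + 1) ((k : ℤ) * h)) :
    (L.drop (k * n)).count (1 - (k : ℤ)) ≤ k ∧
    L.take (k * n) ∈ fs k a r n ((k : ℤ) * (h - 1 + ((L.drop (k * n)).count (1 - (k : ℤ)) : ℕ))) ∧
    L.drop (k * n) ∈ DBlock k a r ((L.drop (k * n)).count (1 - (k : ℤ))) h := by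
  obtain ⟨hlen, hsum, hmem, hdepth, hnh⟩ := hL
  have hmul : k * (n + 1) = k * n + k := by ring
  set P := L.take (k * n) with hPdef
  set B := L.drop (k * n) with hBdef
  set j := B.count (1 - (k : ℤ)) with hjdef
  have hdecomp : P ++ B = L := List.take_append_drop _ _
  have hBlen : B.length = k := by rw [hBdef, List.length_drop, hlen]; omega
  have hPlen : P.length = k * n := by
    rw [hPdef, List.length_take, hlen]; omega
  have hBmem : ∀ s ∈ B, s = 1 ∨ s = 1 - (k : ℤ) := fun s hs => hmem s (List.drop_subset _ _ hs)
  have hPmem : ∀ s ∈ P, s = 1 ∨ s = 1 - (k : ℤ) := fun s hs => hmem s (List.take_subset _ _ hs)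
  have hj : j ≤ k := le_trans List.count_le_length (le_of_eq hBlen)
  have hBsum : B.sum = (k : ℤ) - k * j := by
    rw [sum_eq_length_sub k hk B hBmem, hBlen]
  have hPBsum : P.sum + B.sum = (k : ℤ) * h := by
    rw [← List.sum_append, hdecomp, hsum]
  have hPsum : P.sum = (k : ℤ) * (h - 1 + j) := by
    have : P.sum = (k:ℤ) * h - ((k:ℤ) - k * j) := by omega
    rw [this]; ring
  refine ⟨hj, ⟨hPlen, hPsum, hPmem, ?_, ?_⟩, ⟨hBlen, hBmem, rfl, ?_, ?_⟩⟩
  · -- depth for P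
    intro i
    rw [hPdef, List.take_take]
    exact hdepth _
  · -- no hill in P
    rintro ⟨i, hir, hU, hD, hS⟩
    refine hnh ⟨i, by omega, ?_, ?_, ?_⟩
    · intro t ht
      rw [← getD_take' L (0:ℤ) (show i + t < k*n by omega)]
      exact hU t ht
    · rw [← getD_take' L (0:ℤ) (show i + r < k*n by omega)]
      exact hD
    · rw [hPdef, List.take_take, min_eq_left (by omega : i + r + 1 ≤ k * n)] at hS
      exact hS
  · -- depth for B
    intro t
    have := hdepth (k * n + t)
    rw [List.take_add, ← hPdef, ← hBdef] at this
    rw [List.sum_append, hPsum] at this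
    exact this
  · -- no block hill in B
    rintro ⟨hh0, hD, hU⟩
    refine hnh ⟨k*n + (k-1-r), by omega, ?_, ?_, ?_⟩
    · intro t ht
      have he : k*n + (k-1-r) + t = k*n + (k-1-r+t) := by omega
      rw [he, ← getD_drop', ← hBdef]
      exact hU t ht
    · have he : k*n + (k-1-r) + r = k*n + (k-1) := by omega
      rw [he, ← getD_drop', ← hBdef]
      exact hD
    · have he : k*n + (k-1-r) + r + 1 = k*(n+1) := by omega
      rw [he, ← hlen, List.take_length, hsum, hh0, mul_zero]

theorem fs_glue (hk : 2 ≤ k) (ha : a ≤ k - 1) (hr1 : 1 ≤ r) (hr2 : r ≤ k - 1)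
    {n : ℕ} {h : ℤ} {j : ℕ} (hj : j ≤ k) {P B : List ℤ}
    (hP : P ∈ fs k a r n ((k : ℤ) * (h - 1 + (j : ℕ)))) (hB : B ∈ DBlock k a r j h) :
    P ++ B ∈ fs k a r (n + 1) ((k : ℤ) * h) := by
  obtain ⟨hPlen, hPsum, hPmem, hPdepth, hPnh⟩ := hP
  obtain ⟨hBlen, hBmem, hBcount, hBdepth, hBnh⟩ := hB
  have hmul : k * (n + 1) = k * n + k := by ring
  have hBsum : B.sum = (k : ℤ) - k * j := by
    rw [sum_eq_length_sub k hk B hBmem, hBlen, hBcount]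
  have hlen : (P ++ B).length = k * (n+1) := by
    rw [List.length_append, hPlen, hBlen]; omega
  have hsum : (P ++ B).sum = (k : ℤ) * h := by
    rw [List.sum_append, hPsum, hBsum]; ring
  have hmem : ∀ s ∈ P ++ B, s = 1 ∨ s = 1 - (k : ℤ) := by
    intro s hs
    rcases List.mem_append.mp hs with hs | hs
    · exact hPmem s hs
    · exact hBmem s hs
  have hgB : ∀ t, (P ++ B).getD (k*n + t) 0 = B.getD t 0 := by
    intro t
    rw [List.getD_append_right _ _ _ _ (by omega : P.length ≤ k*n + t), hPlen]
    congr 1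
    omega
  refine ⟨hlen, hsum, hmem, ?_, ?_⟩
  · intro i
    rcases le_or_gt i (k * n) with hi | hi
    · rw [List.take_append_of_le_length (by omega)]
      exact hPdepth i
    · have he : i = k*n + (i - k*n) := by omega
      rw [he, List.take_add, List.take_left' hPlen, List.drop_left' hPlen, List.sum_append, hPsum]
      exact hBdepth _
  · rintro ⟨i, hir, hU, hD, hS⟩
    obtain ⟨c, hc⟩ := hill_pos_mult k hk hmem (by omega) hS
    have hcle : c ≤ n + 1 := by
      have h1 : k * c ≤ k * (n+1) := by omega
      exact Nat.le_of_mul_le_mul_left h1 (by omega)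
    rcases le_or_gt c n with hcn | hcn
    · -- hill inside P
      have hle : i + r + 1 ≤ k * n := by
        have : k * c ≤ k * n := Nat.mul_le_mul_left k hcn
        omega
      refine hPnh ⟨i, by omega, ?_, ?_, ?_⟩
      · intro t ht
        rw [← List.getD_append P B 0 _ (by omega : i + t < P.length)]
        exact hU t ht
      · rw [← List.getD_append P B 0 _ (by omega : i + r < P.length)]
        exact hD
      · rw [← List.take_append_of_le_length (by omega : i + r + 1 ≤ P.length)]
        exact hS
    · -- hill in B
      have hceq : c = n + 1 := by omega
      have hpeq : i + r = k*n + (k-1) := by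
        subst hceq; omega
      have hh0 : h = 0 := by
        have htk : (P ++ B).take (i + r + 1) = P ++ B := by
          apply List.take_of_length_le; omega
        rw [htk, hsum] at hS
        have hkne : (k:ℤ) ≠ 0 := by positivity
        exact (mul_eq_zero.mp hS).resolve_left hkne
      refine hBnh ⟨hh0, ?_, ?_⟩
      · rw [← hgB (k-1), ← hpeq]
        exact hD
      · intro t ht
        rw [← hgB (k-1-r+t)]
        have he : k*n + (k-1-r+t) = i + t := by omega
        rw [he]
        exact hU t ht

noncomputable def E1 (hk : 2 ≤ k) (ha : a ≤ k - 1) (hr1 : 1 ≤ r) (hr2 : r ≤ k - 1)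
    (n : ℕ) (h : ℤ) :
    ↥(fs k a r (n + 1) ((k : ℤ) * h)) ≃
      Σ t : Fin (k + 1), {pr : List ℤ × List ℤ //
        pr.1 ∈ fs k a r n ((k : ℤ) * (h - 1 + ((t : ℕ) : ℤ))) ∧ pr.2 ∈ DBlock k a r (t : ℕ) h} where
  toFun L := ⟨⟨((L : List ℤ).drop (k * n)).count (1 - (k : ℤ)),
      Nat.lt_succ_of_le (fs_peel k a r hk ha hr1 hr2 L.2).1⟩,
    ⟨((L : List ℤ).take (k * n), (L : List ℤ).drop (k * n)),
      (fs_peel k a r hk ha hr1 hr2 L.2).2.1, (fs_peel k a r hk ha hr1 hr2 L.2).2.2⟩⟩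
  invFun s := ⟨s.2.val.1 ++ s.2.val.2,
    fs_glue k a r hk ha hr1 hr2 (Nat.lt_succ_iff.mp s.1.2) s.2.2.1 s.2.2.2⟩
  left_inv L := Subtype.ext (List.take_append_drop _ _)
  right_inv := by
    rintro ⟨t, ⟨⟨P, B⟩, hP, hB⟩⟩
    have hlen : P.length = k * n := hP.1
    have hdrop : (P ++ B).drop (k * n) = B := List.drop_left' hlen
    dsimp only
    refine sigma_subtype_ext (P := fun (t : Fin (k+1)) (pr : List ℤ × List ℤ) =>
      pr.1 ∈ fs k a r n ((k : ℤ) * (h - 1 + ((t : ℕ) : ℤ))) ∧ pr.2 ∈ DBlock k a r (t : ℕ) h) ?_ ?_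
    · apply Fin.ext
      simp only [hdrop]
      exact hB.2.2.1
    · simp only [hdrop]
      exact congrArg (fun z => (z, B)) (List.take_left' hlen)

/-! ### words from subsets -/

def wordOf (S : Finset ℕ) : List ℤ :=
  (List.range k).map (fun i => if i ∈ S then 1 - (k : ℤ) else 1)

theorem length_wordOf (S : Finset ℕ) : (wordOf k S).length = k := by
  simp [wordOf]

theorem getD_wordOf (S : Finset ℕ) {i : ℕ} (hi : i < k) :
    (wordOf k S).getD i 0 = if i ∈ S then 1 - (k : ℤ) else 1 := by
  rw [List.getD_eq_getElem _ _ (by simpa [wordOf] using hi)]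
  simp only [wordOf]
  rw [List.getElem_map, List.getElem_range]

theorem mem_wordOf {S : Finset ℕ} {s : ℤ} (hs : s ∈ wordOf k S) :
    s = 1 ∨ s = 1 - (k : ℤ) := by
  simp only [wordOf, List.mem_map] at hs
  obtain ⟨i, -, rfl⟩ := hs
  by_cases hi : i ∈ S <;> simp [hi]

theorem take_sum_wordOf (S : Finset ℕ) {t : ℕ} (ht : t ≤ k) :
    ((wordOf k S).take t).sum = (t : ℤ) - k * #((range t).filter (fun i => i ∈ S)) := by
  have h1 : (wordOf k S).take t =
      (List.range t).map (fun i => if i ∈ S then 1 - (k : ℤ) else 1) := by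
    simp only [wordOf]
    rw [← List.map_take, List.take_range, min_eq_left ht]
  rw [h1, sum_map_range]
  have h2 : ∀ i, (if i ∈ S then 1 - (k : ℤ) else 1) = 1 - (if i ∈ S then (k : ℤ) else 0) := by
    intro i; by_cases hi : i ∈ S <;> simp [hi]
  rw [Finset.sum_congr rfl (fun i _ => h2 i), Finset.sum_sub_distrib, Finset.sum_const,
    Finset.card_range, ← Finset.sum_filter (fun i => i ∈ S) (fun _ => (k : ℤ)), Finset.sum_const]
  simp [mul_comm]

theorem sum_wordOf {S : Finset ℕ} (hS : S ⊆ range k) :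
    (wordOf k S).sum = (k : ℤ) - k * #S := by
  have h1 : (wordOf k S).take k = wordOf k S := by
    rw [List.take_of_length_le]
    rw [length_wordOf]
  have h2 : (range k).filter (fun i => i ∈ S) = S := by
    ext x
    simp only [Finset.mem_filter, Finset.mem_range]
    exact ⟨fun hx => hx.2, fun hx => ⟨Finset.mem_range.mp (hS hx), hx⟩⟩
  rw [← h1, take_sum_wordOf k S (le_refl k), h2]

theorem count_wordOf (hk : 2 ≤ k) {S : Finset ℕ} (hS : S ⊆ range k) :
    (wordOf k S).count (1 - (k : ℤ)) = #S := by
  have h1 := sum_eq_length_sub k hk (wordOf k S) (fun s hs => mem_wordOf k hs)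
  rw [sum_wordOf k hS, length_wordOf] at h1
  have hkpos : (0:ℤ) < k := by positivity
  have : (k:ℤ) * ((wordOf k S).count (1 - (k:ℤ)) : ℤ) = (k:ℤ) * (#S : ℤ) := by linarith
  have := mul_left_cancel₀ (ne_of_gt hkpos) this
  exact_mod_cast this

def Sof (b : List ℤ) : Finset ℕ := (range k).filter (fun i => b.getD i 0 = 1 - (k : ℤ))

theorem Sof_subset (b : List ℤ) : Sof k b ⊆ range k := Finset.filter_subset _ _

theorem eq_wordOf_Sof (hk : 2 ≤ k) {b : List ℤ} (hlen : b.length = k)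
    (hmem : ∀ s ∈ b, s = 1 ∨ s = 1 - (k : ℤ)) : b = wordOf k (Sof k b) := by
  apply List.ext_getElem (by simp [wordOf, hlen])
  intro i h1 h2
  have hik : i < k := by omega
  simp only [wordOf]
  rw [List.getElem_map, List.getElem_range]
  have hgd : b.getD i 0 = b[i] := List.getD_eq_getElem b 0 h1
  have hbi := hmem b[i] (List.getElem_mem h1)
  have hmemS : i ∈ Sof k b ↔ b.getD i 0 = 1 - (k:ℤ) := by
    simp [Sof, Finset.mem_filter, Finset.mem_range, hik]
  rcases hbi with hb1 | hb1
  · rw [if_neg]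
    · exact hb1
    · rw [hmemS, hgd, hb1]
      omega
  · rw [if_pos]
    · exact hb1
    · rw [hmemS, hgd]
      exact hb1

/-! ### depth and hill translation -/

theorem depth_of_good (hk : 2 ≤ k) (ha : a ≤ k - 1) {S : Finset ℕ} {j : ℕ} {h : ℤ}
    (hS : S ⊆ range k) (hcard : #S = j) (h0 : 0 ≤ h) (h1 : 1 ≤ h + j)
    (hbad : h = 0 → ¬ S ⊆ range (k - a - 1)) :
    ∀ t, -(a : ℤ) ≤ (k : ℤ) * (h - 1 + j) + ((wordOf k S).take t).sum := by
  intro t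
  have hkpos : (0:ℤ) < k := by positivity
  rcases le_or_gt t k with htk | htk
  · rw [take_sum_wordOf k S htk]
    set c := #((range t).filter (fun i => i ∈ S)) with hc
    have hcj : (c : ℤ) ≤ (j : ℤ) := by
      have : (range t).filter (fun i => i ∈ S) ⊆ S := fun x hx => (Finset.mem_filter.mp hx).2
      exact_mod_cast hcard ▸ Finset.card_le_card this
    rcases eq_or_ne h 0 with rfl | hne
    · have hj1 : 1 ≤ (j : ℤ) := by omega
      by_contra hlt
      push_neg at hlt
      rcases lt_or_ge (c : ℤ) (j : ℤ) with hcl | hcl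
      · have : (k:ℤ) * c ≤ k * ((j:ℤ) - 1) := by
          apply mul_le_mul_of_nonneg_left (by omega) (by positivity)
        nlinarith
      · have hceq : (c : ℤ) = j := le_antisymm hcj hcl
        have hcj' : c = j := by exact_mod_cast hceq
        have hle : #S ≤ #((range t).filter (fun i => i ∈ S)) := by omega
        have hfil : (range t).filter (fun i => i ∈ S) = S :=
          Finset.eq_of_subset_of_card_le (fun x hx => (Finset.mem_filter.mp hx).2) hle
        have hsub : S ⊆ range t := by
          intro x hx
          have hxm : x ∈ (range t).filter (fun i => i ∈ S) := by rw [hfil]; exact hx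
          exact (Finset.mem_filter.mp hxm).1
        have htka : t ≤ k - a - 1 := by
          have e : (k:ℤ) * (0 - 1 + (j:ℤ)) = k * j - k := by ring
          rw [e, hceq] at hlt
          omega
        exact hbad rfl (hsub.trans (Finset.range_subset_range.mpr htka))
    · have hh1 : 1 ≤ h := by omega
      have e1 : (k:ℤ) * (j : ℤ) ≤ (k:ℤ) * (h - 1 + j) := by
        apply mul_le_mul_of_nonneg_left (by omega) (by positivity)
      have e2 : (k:ℤ) * c ≤ (k:ℤ) * j := by
        apply mul_le_mul_of_nonneg_left hcj (by positivity)
      have hta : (0:ℤ) ≤ t := by positivity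
      have haz : (0:ℤ) ≤ a := by positivity
      linarith
  · rw [List.take_of_length_le (by rw [length_wordOf]; omega), sum_wordOf k hS, hcard]
    have : (k:ℤ) * (h - 1 + j) + ((k:ℤ) - k * j) = k * h := by ring
    rw [this]
    have : (0:ℤ) ≤ (k:ℤ) * h := mul_nonneg (by positivity) h0
    have haz : (0:ℤ) ≤ a := by positivity
    linarith

theorem depth_fails (hk : 2 ≤ k) (ha : a ≤ k - 1) {S : Finset ℕ} {j : ℕ}
    (hS : S ⊆ range k) (hcard : #S = j) (hsub : S ⊆ range (k - a - 1)) :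
    ¬ (∀ t, -(a : ℤ) ≤ (k : ℤ) * ((0:ℤ) - 1 + j) + ((wordOf k S).take t).sum) := by
  intro hdepth
  have := hdepth (k - a - 1)
  rw [take_sum_wordOf k S (by omega)] at this
  have hfil : (range (k - a - 1)).filter (fun i => i ∈ S) = S := by
    ext x
    simp only [Finset.mem_filter]
    exact ⟨fun hx => hx.2, fun hx => ⟨hsub hx, hx⟩⟩
  rw [hfil, hcard] at this
  have hc : ((k - a - 1 : ℕ) : ℤ) = (k:ℤ) - a - 1 := by omega
  have e : (k:ℤ) * ((0:ℤ) - 1 + (j:ℤ)) = k * j - k := by ring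
  rw [hc, e] at this
  linarith

theorem blockHill_wordOf (hk : 2 ≤ k) (hr1 : 1 ≤ r) (hr2 : r ≤ k - 1) {S : Finset ℕ} {h : ℤ} :
    BlockHill k r (wordOf k S) h ↔
      (h = 0 ∧ (k - 1) ∈ S ∧ ∀ u ∈ Finset.Ico (k - 1 - r) (k - 1), u ∉ S) := by
  constructor
  · rintro ⟨hh0, hD, hU⟩
    refine ⟨hh0, ?_, ?_⟩
    · rw [getD_wordOf k S (by omega)] at hD
      by_contra hmem
      rw [if_neg hmem] at hD
      omega
    · intro u hu
      rw [Finset.mem_Ico] at hu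
      have := hU (u - (k - 1 - r)) (by omega)
      rw [show k - 1 - r + (u - (k - 1 - r)) = u by omega, getD_wordOf k S (by omega)] at this
      intro hmem
      rw [if_pos hmem] at this
      omega
  · rintro ⟨hh0, hD, hU⟩
    refine ⟨hh0, ?_, ?_⟩
    · rw [getD_wordOf k S (by omega), if_pos hD]
    · intro t ht
      rw [getD_wordOf k S (by omega), if_neg]
      exact hU (k - 1 - r + t) (Finset.mem_Ico.mpr (by omega))

/-! ### block counting -/

def pA (S : Finset ℕ) : Prop := S ⊆ range (k - a - 1)

def pB (S : Finset ℕ) : Prop :=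
  (k - 1) ∈ S ∧ ∀ u ∈ Finset.Ico (k - 1 - r) (k - 1), u ∉ S

def SProp (h : ℤ) (S : Finset ℕ) : Prop :=
  h = 0 → (¬ pA k a S ∧ ¬ pB k r S)

noncomputable def validF (j : ℕ) (h : ℤ) : Finset (List ℤ) :=
  ((powersetCard j (range k)).filter (SProp k a r h)).image (wordOf k)

theorem dblock_eq (hk : 2 ≤ k) (ha : a ≤ k - 1) (hr1 : 1 ≤ r) (hr2 : r ≤ k - 1)
    {j : ℕ} {h : ℤ} (h0 : 0 ≤ h) (h1 : 1 ≤ h + j) (hj : j ≤ k) :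
    DBlock k a r j h = ↑(validF k a r j h) := by
  ext b
  constructor
  · rintro ⟨hlen, hmem, hcount, hdepth, hnh⟩
    have hbw : b = wordOf k (Sof k b) := eq_wordOf_Sof k hk hlen hmem
    have hsub : Sof k b ⊆ range k := Sof_subset k b
    have hcard : #(Sof k b) = j := by
      rw [← count_wordOf k hk hsub, ← hbw]
      exact hcount
    have hsok : SProp k a r h (Sof k b) := by
      unfold SProp pA pB
      intro hh0
      constructor
      · intro hsub2
        apply depth_fails k a hk ha hsub hcard hsub2
        intro t
        have := hdepth t
        rwa [hh0, hbw] at this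
      · rintro ⟨hm1, hm2⟩
        apply hnh
        rw [hbw]
        exact (blockHill_wordOf k r hk hr1 hr2).mpr ⟨hh0, hm1, hm2⟩
    exact Finset.mem_coe.mpr (Finset.mem_image.mpr ⟨Sof k b,
      Finset.mem_filter.mpr ⟨Finset.mem_powersetCard.mpr ⟨hsub, hcard⟩, hsok⟩, hbw.symm⟩)
  · intro hb
    obtain ⟨S, hSf, rfl⟩ := Finset.mem_image.mp (Finset.mem_coe.mp hb)
    obtain ⟨hpc, hsok⟩ := Finset.mem_filter.mp hSf
    obtain ⟨hsub, hcard⟩ := Finset.mem_powersetCard.mp hpc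
    refine ⟨length_wordOf k S, fun s hs => mem_wordOf k hs,
      by rw [count_wordOf k hk hsub, hcard],
      depth_of_good k a hk ha hsub hcard h0 h1 (fun hh0 => (hsok hh0).1), ?_⟩
    intro hbh
    obtain ⟨hh0, hm1, hm2⟩ := (blockHill_wordOf k r hk hr1 hr2).mp hbh
    exact (hsok hh0).2 (show pB k r S from ⟨hm1, hm2⟩)

theorem wordOf_injOn (hk : 2 ≤ k) : Set.InjOn (wordOf k) {S : Finset ℕ | S ⊆ range k} := by
  intro S1 hS1 S2 hS2 heq
  ext x
  by_cases hx : x < k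
  · have hgd := congrArg (fun l => l.getD x 0) heq
    rw [getD_wordOf k S1 hx, getD_wordOf k S2 hx] at hgd
    constructor
    · intro hm; by_contra hm2; rw [if_pos hm, if_neg hm2] at hgd; omega
    · intro hm; by_contra hm2; rw [if_neg hm2, if_pos hm] at hgd; omega
  · constructor
    · intro hm; exact absurd (Finset.mem_range.mp (hS1 hm)) hx
    · intro hm; exact absurd (Finset.mem_range.mp (hS2 hm)) hx

theorem cc_top (hk : 2 ≤ k) (ha : a ≤ k - 1) (hr1 : 1 ≤ r) (hr2 : r ≤ k - 1) (h : ℤ) :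
    cc k a r k h = 1 := by
  unfold cc
  split
  · rw [Nat.choose_self, Nat.choose_eq_zero_of_lt (show k - a - 1 < k by omega),
      Nat.choose_eq_zero_of_lt (show k - r - 1 < k - 1 by omega)]
  · exact Nat.choose_self k

theorem validF_card (hk : 2 ≤ k) (ha : a ≤ k - 1) (hr1 : 1 ≤ r) (hr2 : r ≤ k - 1)
    {j : ℕ} {h : ℤ} (h0 : 0 ≤ h) (h1 : 1 ≤ h + j) (hj : j ≤ k) :
    #(validF k a r j h) = cc k a r j h := by
  unfold validF
  rw [Finset.card_image_of_injOn (Set.InjOn.mono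
    (fun S hS => (Finset.mem_powersetCard.mp (Finset.mem_filter.mp hS).1).1)
    (wordOf_injOn k hk))]
  rcases eq_or_ne h 0 with rfl | hne
  · have hj1 : 1 ≤ j := by omega
    have hsplit := Finset.card_filter_add_card_filter_not
      (s := powersetCard j (range k)) (p := SProp k a r 0)
    have hneg : (powersetCard j (range k)).filter (fun S => ¬ SProp k a r 0 S) =
        ((powersetCard j (range k)).filter (pA k a)) ∪
        ((powersetCard j (range k)).filter (pB k r)) := by
      ext S
      simp only [Finset.mem_filter, Finset.mem_union]
      constructor
      · rintro ⟨hpc, hns⟩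
        have hor : pA k a S ∨ pB k r S := by
          by_contra hc
          push_neg at hc
          exact hns (fun _ => ⟨hc.1, hc.2⟩)
        rcases hor with hcase | hcase
        · exact Or.inl ⟨hpc, hcase⟩
        · exact Or.inr ⟨hpc, hcase⟩
      · rintro (⟨hpc, hA⟩ | ⟨hpc, hB⟩)
        · exact ⟨hpc, fun hsp => (hsp rfl).1 hA⟩
        · exact ⟨hpc, fun hsp => (hsp rfl).2 hB⟩
    have hdisj : Disjoint
        ((powersetCard j (range k)).filter (pA k a))
        ((powersetCard j (range k)).filter (pB k r)) := by
      rw [Finset.disjoint_left]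
      intro S hSA hSB
      have hA : S ⊆ range (k - a - 1) := (Finset.mem_filter.mp hSA).2
      have hB : (k-1) ∈ S := ((Finset.mem_filter.mp hSB).2 :
        (k - 1) ∈ S ∧ ∀ u ∈ Finset.Ico (k - 1 - r) (k - 1), u ∉ S).1
      have := Finset.mem_range.mp (hA hB)
      omega
    have hcardA : #((powersetCard j (range k)).filter (pA k a))
        = (k-a-1).choose j := by
      have heq : (powersetCard j (range k)).filter (pA k a)
          = powersetCard j (range (k-a-1)) := by
        ext S
        simp only [Finset.mem_filter, Finset.mem_powersetCard]
        constructor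
        · rintro ⟨⟨-, hc⟩, hsub⟩; exact ⟨hsub, hc⟩
        · rintro ⟨hsub, hc⟩
          refine ⟨⟨hsub.trans (Finset.range_subset_range.mpr (by omega)), hc⟩, ?_⟩
          exact (hsub : pA k a S)
      rw [heq, Finset.card_powersetCard, Finset.card_range]
    have hcardB : #((powersetCard j (range k)).filter (pB k r))
        = (k-r-1).choose (j-1) := by
      have hbij : #((powersetCard j (range k)).filter (pB k r))
          = #(powersetCard (j-1) (range (k-r-1))) := by
        apply Finset.card_bij' (fun S _ => S.erase (k-1)) (fun T _ => insert (k-1) T)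
        · intro S hS
          exact Finset.insert_erase ((Finset.mem_filter.mp hS).2 :
            (k - 1) ∈ S ∧ ∀ u ∈ Finset.Ico (k - 1 - r) (k - 1), u ∉ S).1
        · intro T hT
          apply Finset.erase_insert
          intro hm
          have := Finset.mem_range.mp ((Finset.mem_powersetCard.mp hT).1 hm)
          omega

        · intro S hS
          obtain ⟨hpc, hBp⟩ := Finset.mem_filter.mp hS
          obtain ⟨hB1, hB2⟩ : (k-1) ∈ S ∧ ∀ u ∈ Finset.Ico (k-1-r) (k-1), u ∉ S := hBp
          obtain ⟨hsub, hcard⟩ := Finset.mem_powersetCard.mp hpc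
          apply Finset.mem_powersetCard.mpr
          constructor
          · intro x hx
            obtain ⟨hxne, hxS⟩ := Finset.mem_erase.mp hx
            have hxk : x < k := Finset.mem_range.mp (hsub hxS)
            have hxico : x ∉ Finset.Ico (k-1-r) (k-1) := fun hm => hB2 x hm hxS
            rw [Finset.mem_Ico] at hxico
            push_neg at hxico
            exact Finset.mem_range.mpr (by omega)
          · rw [Finset.card_erase_of_mem hB1, hcard]
        · intro T hT
          obtain ⟨hTsub, hTcard⟩ := Finset.mem_powersetCard.mp hT
          have hknotT : (k-1) ∉ T := fun hm => by
            have := Finset.mem_range.mp (hTsub hm); omega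
          apply Finset.mem_filter.mpr
          refine ⟨Finset.mem_powersetCard.mpr ⟨?_, ?_⟩,
            (⟨Finset.mem_insert_self _ _, ?_⟩ :
              (k-1) ∈ insert (k-1) T ∧ ∀ u ∈ Finset.Ico (k-1-r) (k-1), u ∉ insert (k-1) T)⟩
          · intro x hx
            rcases Finset.mem_insert.mp hx with rfl | hxT
            · exact Finset.mem_range.mpr (by omega)
            · have := Finset.mem_range.mp (hTsub hxT)
              exact Finset.mem_range.mpr (by omega)
          · rw [Finset.card_insert_of_notMem hknotT, hTcard]
            omega
          · intro u hu
            rw [Finset.mem_Ico] at hu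
            intro hmem
            rcases Finset.mem_insert.mp hmem with rfl | huT
            · omega
            · have := Finset.mem_range.mp (hTsub huT); omega
      rw [hbij, Finset.card_powersetCard, Finset.card_range]
    have hcc : cc k a r j 0 = k.choose j - (k-a-1).choose j - (k-r-1).choose (j-1) := by
      unfold cc
      rw [if_pos ⟨rfl, by omega⟩]
    rw [hcc]
    rw [hneg, Finset.card_union_of_disjoint hdisj, hcardA, hcardB,
      Finset.card_powersetCard, Finset.card_range] at hsplit
    omega
  · rw [Finset.filter_true_of_mem (fun S _ hh0 => absurd hh0 hne),
      Finset.card_powersetCard, Finset.card_range]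
    unfold cc
    rw [if_neg (by tauto)]

theorem mstep_equiv (hk : 2 ≤ k) (ha : a ≤ k - 1) (hr1 : 1 ≤ r) (hr2 : r ≤ k - 1)
    {j : ℕ} {h : ℤ} (h0 : 0 ≤ h) (h1 : 1 ≤ h + j) (hj : j ≤ k) :
    Nonempty (↥(MStep k a r j h) ≃ Fin (cc k a r j h)) := by
  have hbound : ∀ p : ℤ × ℕ, p ∈ MStep k a r j h → p.2 < cc k a r j h := by
    rintro ⟨s, c⟩ ⟨-, hs, hOK⟩
    simp only at hs ⊢
    rcases hOK with ⟨hs1, hc0⟩ | ⟨d, hd, hsd, hcond⟩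
    · dsimp only at hs1 hc0
      have hj0 : j = 0 := by rw [hs1] at hs; omega
      subst hj0
      have hcc : cc k a r 0 h = k.choose 0 := by unfold cc; rw [if_neg (by simp)]
      rw [hcc, Nat.choose_zero_right]
      omega
    · dsimp only at hsd hcond
      rw [hsd] at hs
      have hd1 : d = j - 1 := by omega
      have hj1 : 1 ≤ j := by omega
      by_cases hjk : j = k
      · have hdl : d = k - 1 := by omega
        rw [if_pos hdl] at hcond
        rw [hjk, cc_top k a r hk ha hr1 hr2 h]
        omega
      · have hdl : ¬ (d = k - 1) := by omega
        rw [if_neg hdl] at hcond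
        rcases eq_or_ne h 0 with rfl | hne
        · rw [if_pos rfl] at hcond
          have hcc : cc k a r j 0 = k.choose j - (k-a-1).choose j - (k-r-1).choose (j-1) := by
            unfold cc; rw [if_pos ⟨rfl, by omega⟩]
          have haf : af k a r d = k.choose j - (k-a-1).choose j - (k-r-1).choose (j-1) := by
            simp only [af]
            rw [show d + 1 = j by omega, hd1]
          rw [haf] at hcond
          rw [hcc]
          exact hcond
        · rw [if_neg hne] at hcond
          have hcc : cc k a r j h = k.choose j := by unfold cc; rw [if_neg (by tauto)]
          have hbf : bf k d = k.choose j := by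
            simp only [bf]; rw [show d + 1 = j by omega]
          rw [hbf] at hcond
          rw [hcc]
          exact hcond
  have hmem : ∀ c : ℕ, c < cc k a r j h → ((1 - (j:ℤ), c) ∈ MStep k a r j h) := by
    intro c hc
    refine ⟨h0, rfl, ?_⟩
    rcases Nat.eq_zero_or_pos j with rfl | hj1
    · left
      refine ⟨by norm_num, ?_⟩
      have hcc : cc k a r 0 h = 1 := by
        unfold cc; rw [if_neg (by simp)]; exact Nat.choose_zero_right k
      omega
    · right
      refine ⟨j - 1, by omega, by push_cast; omega, ?_⟩
      by_cases hjk : j - 1 = k - 1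
      · rw [if_pos hjk]
        have hjj : j = k := by omega
        rw [hjj, cc_top k a r hk ha hr1 hr2 h] at hc
        omega
      · rw [if_neg hjk]
        rcases eq_or_ne h 0 with rfl | hne
        · rw [if_pos rfl]
          have hcc : cc k a r j 0 = k.choose j - (k-a-1).choose j - (k-r-1).choose (j-1) := by
            unfold cc; rw [if_pos ⟨rfl, by omega⟩]
          have haf : af k a r (j-1) = k.choose j - (k-a-1).choose j - (k-r-1).choose (j-1) := by
            simp only [af]; rw [show j - 1 + 1 = j by omega]
          rw [haf, ← hcc]
          exact hc
        · rw [if_neg hne]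
          have hcc : cc k a r j h = k.choose j := by unfold cc; rw [if_neg (by tauto)]
          have hbf : bf k (j-1) = k.choose j := by
            simp only [bf]; rw [show j - 1 + 1 = j by omega]
          rw [hbf, ← hcc]
          exact hc
  refine ⟨⟨fun p => ⟨p.val.2, hbound p.val p.property⟩,
    fun c => ⟨(1 - (j:ℤ), c.val), hmem c.val c.isLt⟩, ?_, ?_⟩⟩
  · rintro ⟨⟨s, c⟩, hp⟩
    apply Subtype.ext
    show ((1 : ℤ) - (j:ℤ), c) = (s, c)
    have hfst := hp.2.1
    dsimp only at hfst
    rw [hfst]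
  · rintro ⟨c, hc⟩
    rfl

theorem block_equiv (hk : 2 ≤ k) (ha : a ≤ k - 1) (hr1 : 1 ≤ r) (hr2 : r ≤ k - 1)
    {j : ℕ} {h : ℤ} (h0 : 0 ≤ h) (h1 : 1 ≤ h + j) (hj : j ≤ k) :
    Nonempty (↥(DBlock k a r j h) ≃ ↥(MStep k a r j h)) := by
  obtain ⟨em⟩ := mstep_equiv k a r hk ha hr1 hr2 h0 h1 hj
  refine ⟨((Equiv.setCongr (dblock_eq k a r hk ha hr1 hr2 h0 h1 hj)).trans
    (((Equiv.subtypeEquivRight (fun x => Finset.mem_coe)).trans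
      (validF k a r j h).equivFin).trans
        (finCongr (validF_card k a r hk ha hr1 hr2 h0 h1 hj)))).trans em.symm⟩

/-! ### the key induction -/

theorem key (hk : 2 ≤ k) (ha : a ≤ k - 1) (hr1 : 1 ≤ r) (hr2 : r ≤ k - 1) :
    ∀ (n : ℕ) (h : ℤ), Nonempty (↥(fs k a r n ((k : ℤ) * h)) ≃ ↥(ms k a r n h)) := by
  intro n
  induction n with
  | zero =>
      intro h
      rcases eq_or_ne h 0 with rfl | hne
      · have hf : ([] : List ℤ) ∈ fs k a r 0 ((k:ℤ) * 0) := by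
          refine ⟨by simp, by simp, by simp, fun i => by simp, ?_⟩
          rintro ⟨i, hi, -⟩
          simp at hi
        have hm : ([] : List (ℤ × ℕ)) ∈ ms k a r 0 0 := by
          refine ⟨rfl, by simp, ?_⟩
          intro i hi
          omega
        refine ⟨⟨fun _ => ⟨[], hm⟩, fun _ => ⟨[], hf⟩, ?_, ?_⟩⟩
        · intro L
          exact Subtype.ext (List.eq_nil_of_length_eq_zero (by simpa using L.2.1)).symm
        · intro L
          exact Subtype.ext (List.eq_nil_of_length_eq_zero (by simpa using L.2.1)).symm
      · have e1 : IsEmpty ↥(fs k a r 0 ((k:ℤ) * h)) := by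
          refine ⟨fun x => ?_⟩
          obtain ⟨L, hlen, hsum, -⟩ := x
          have : L = [] := List.eq_nil_of_length_eq_zero (by simpa using hlen)
          subst this
          simp only [List.sum_nil] at hsum
          have hkne : (k:ℤ) ≠ 0 := by positivity
          exact hne ((mul_eq_zero.mp hsum.symm).resolve_left hkne)
        have e2 : IsEmpty ↥(ms k a r 0 h) := by
          refine ⟨fun x => ?_⟩
          obtain ⟨L, hlen, hsum, -⟩ := x
          have : L = [] := List.eq_nil_of_length_eq_zero hlen
          subst this
          simp only [List.map_nil, List.sum_nil] at hsum
          exact hne hsum.symm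
        exact ⟨Equiv.equivOfIsEmpty _ _⟩
  | succ n ih =>
      intro h
      rcases lt_or_ge h 0 with hneg | h0
      · have hkpos : (0:ℤ) < k := by positivity
        have e1 : IsEmpty ↥(fs k a r (n+1) ((k:ℤ) * h)) := by
          refine ⟨fun x => ?_⟩
          have := fs_nonneg k a r hk ha x.2
          nlinarith
        have e2 : IsEmpty ↥(ms k a r (n+1) h) := by
          refine ⟨fun x => ?_⟩
          have := ms_nonneg k a r x.2
          omega
        exact ⟨Equiv.equivOfIsEmpty _ _⟩
      · have hA : ∀ t : Fin (k+1),
            Nonempty (↥(fs k a r n ((k:ℤ)*(h-1+((t:ℕ):ℤ)))) ≃ ↥(ms k a r n (h-1+((t:ℕ):ℤ)))) :=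
          fun t => ih (h-1+((t:ℕ):ℤ))
        have hB : ∀ t : Fin (k+1), Nonempty ↥(fs k a r n ((k:ℤ)*(h-1+((t:ℕ):ℤ)))) →
            Nonempty (↥(DBlock k a r (t:ℕ) h) ≃ ↥(MStep k a r (t:ℕ) h)) := by
          rintro t ⟨x⟩
          have h1 : (0:ℤ) ≤ (k:ℤ)*(h-1+((t:ℕ):ℤ)) := fs_nonneg k a r hk ha x.2
          have hkpos : (0:ℤ) < k := by positivity
          have h2 : (0:ℤ) ≤ h-1+((t:ℕ):ℤ) := nonneg_of_mul_nonneg_right (by nlinarith) hkpos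
          exact block_equiv k a r hk ha hr1 hr2 h0 (by omega) (Nat.lt_succ_iff.mp t.2)
        obtain ⟨emid⟩ := nonempty_sigma_prod_congr hA hB
        refine ⟨(E1 k a r hk ha hr1 hr2 n h).trans (?_)⟩
        exact ((Equiv.sigmaCongrRight fun t => Equiv.subtypeProdEquivProd).trans
          (emid.trans
            ((Equiv.sigmaCongrRight fun t => Equiv.subtypeProdEquivProd).symm))).trans
          (E2 k a r hk n h).symm

end FineAux


/-- Generalized `(k,r)`-Fine paths of depth `a` are equinumerous with suitably colored
order-`(k-1)` Motzkin paths. -/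
theorem fine_eq_colored_motzkin (k a r : ℕ) (hk : 2 ≤ k) (ha : a ≤ k - 1)
    (hr1 : 1 ≤ r) (hr2 : r ≤ k - 1) (n m : ℕ) (hm : m ≤ n) :
    F k a r n m =
      M (k - 1)
        (fun i => k.choose (i + 1) - (k - a - 1).choose (i + 1) - (k - r - 1).choose i)
        (fun i => k.choose (i + 1)) n m := by
  classical
  have hset : {L | L ∈ DyckSet k a n m ∧ ¬ HasHill k r L} = FineAux.fs k a r n ((k : ℤ) * m) := by
    ext L
    simp only [FineAux.fs, DyckSet, Set.mem_setOf_eq]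
    tauto
  obtain ⟨e⟩ := FineAux.key k a r hk ha hr1 hr2 n (m : ℤ)
  have h2 : FineAux.ms k a r n (m : ℤ) =
      ColoredMotzkinSet (k - 1) (FineAux.af k a r) (FineAux.bf k) n m := rfl
  have : F k a r n m = Nat.card ↥(FineAux.fs k a r n ((k : ℤ) * m)) := by
    unfold F; rw [hset]
  rw [this]
  exact Nat.card_congr (e.trans (Equiv.setCongr h2))
end

section
/- Fix k ≥ 2 and 1 ≤ r ≤ k-1. The generating function F_{k,r}(t) = Σ_n F^{k,0,r}_{n,0} t^n of the (k,r)-Fine numbers satisfies F_{k,r}(t) = C_k(t)/(1 + t·C_k(t)^{k-r}), where C_k(t) is the unique power series with constant term 1 satisfying C_k(t) = 1 + t·C_k(t)^k. -/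
open Finset PowerSeries

namespace FineGFAux

/-- all steps are `1` or `1-k` -/
def Steps (k : ℕ) (L : List ℤ) : Prop := ∀ s ∈ L, s = 1 ∨ s = 1 - (k : ℤ)

/-- all prefix sums are nonnegative -/
def NN (L : List ℤ) : Prop := ∀ i, 0 ≤ (L.take i).sum

/-- paths from `0` to `m` staying `≥ 0`, with `n` down-steps -/
def PS (k m n : ℕ) : Set (List ℤ) :=
  {L | Steps k L ∧ NN L ∧ L.sum = (m : ℤ) ∧ L.count (1 - (k : ℤ)) = n}

lemma steps_append {k} {A B : List ℤ} (hA : Steps k A) (hB : Steps k B) :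
    Steps k (A ++ B) := by
  intro s hs; rcases List.mem_append.1 hs with h | h
  · exact hA s h
  · exact hB s h

lemma steps_cons {k : ℕ} {A : List ℤ} {a : ℤ} (ha : a = 1 ∨ a = 1 - (k:ℤ)) (hA : Steps k A) :
    Steps k (a :: A) := by
  intro s hs; rcases List.mem_cons.1 hs with h | h
  · subst h; exact ha
  · exact hA s h

lemma steps_sublist {k} {A B : List ℤ} (h : A.Sublist B) (hB : Steps k B) : Steps k A :=
  fun s hs => hB s (h.mem hs)

lemma steps_take {k} {L : List ℤ} (hL : Steps k L) (i : ℕ) : Steps k (L.take i) :=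
  steps_sublist (List.take_sublist i L) hL

lemma steps_drop {k} {L : List ℤ} (hL : Steps k L) (i : ℕ) : Steps k (L.drop i) :=
  steps_sublist (List.drop_sublist i L) hL

lemma one_ne_down {k : ℕ} (hk : 2 ≤ k) : (1 : ℤ) ≠ 1 - (k : ℤ) := by
  have : (2:ℤ) ≤ (k:ℤ) := by exact_mod_cast hk
  omega

/-- length in terms of sum and number of down steps -/
lemma length_eq {k : ℕ} (hk : 2 ≤ k) {L : List ℤ} (h : Steps k L) :
    (L.length : ℤ) = L.sum + (k : ℤ) * (L.count (1 - (k : ℤ))) := by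
  induction L with
  | nil => simp
  | cons a L ih =>
    have hL : Steps k L := fun s hs => h s (List.mem_cons_of_mem a hs)
    have ha := h a (List.mem_cons_self)
    have ih' := ih hL
    rcases ha with ha | ha
    · subst ha
      rw [List.count_cons]
      have : ((1:ℤ) == 1 - (k:ℤ)) = false := by
        simp [one_ne_down hk]
      rw [this]
      push_cast
      simp at ih' ⊢
      omega
    · subst ha
      rw [List.count_cons]
      simp only [beq_self_eq_true, if_true]
      push_cast
      simp only [mul_add, mul_one] at ih' ⊢
      simp at ih' ⊢
      omega

lemma length_of_mem_PS {k m n : ℕ} (hk : 2 ≤ k) {L : List ℤ} (h : L ∈ PS k m n) :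
    L.length = m + k * n := by
  obtain ⟨hs, _, hsum, hcount⟩ := h
  have := length_eq hk hs
  rw [hsum, hcount] at this
  have : (L.length : ℤ) = ((m + k * n : ℕ) : ℤ) := by push_cast; omega
  exact_mod_cast this


/-! ### Finiteness -/

lemma steps_map_inj {k : ℕ} (hk : 2 ≤ k) :
    ∀ (L M : List ℤ), Steps k L → Steps k M →
      L.map (fun z => decide (z = 1)) = M.map (fun z => decide (z = 1)) → L = M := by
  intro L
  induction L with
  | nil => intro M _ _ h; cases M with
    | nil => rfl
    | cons b M => simp at h
  | cons a L ih =>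
    intro M hL hM h
    cases M with
    | nil => simp at h
    | cons b M =>
      simp only [List.map_cons, List.cons.injEq] at h
      have ha := hL a (List.mem_cons_self)
      have hb := hM b (List.mem_cons_self)
      have hL' : Steps k L := fun s hs => hL s (List.mem_cons_of_mem a hs)
      have hM' : Steps k M := fun s hs => hM s (List.mem_cons_of_mem b hs)
      have hab : a = b := by
        rcases ha with ha | ha <;> rcases hb with hb | hb <;> subst ha <;> subst hb <;>
          first
          | rfl
          | (exfalso; simp [one_ne_down hk, (one_ne_down hk).symm] at h)
      exact hab ▸ congrArg (a :: ·) (ih M hL' hM' h.2)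

lemma finite_steps_length {k N : ℕ} (hk : 2 ≤ k) :
    {L : List ℤ | Steps k L ∧ L.length = N}.Finite := by
  apply Set.Finite.of_finite_image (f := fun L => L.map (fun z => decide (z = 1)))
  · apply Set.Finite.subset (List.finite_length_eq Bool N)
    rintro l ⟨L, hL, rfl⟩
    simp [hL.2]
  · intro L hL M hM h
    exact steps_map_inj hk L M hL.1 hM.1 h

lemma finite_PS {k m n : ℕ} (hk : 2 ≤ k) : (PS k m n).Finite := by
  apply Set.Finite.subset (finite_steps_length (N := m + k * n) hk)
  intro L hL
  exact ⟨hL.1, length_of_mem_PS hk hL⟩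

/-! ### prefix sum helpers -/

lemma sum_take_append_right (A B : List ℤ) {i : ℕ} (h : A.length ≤ i) :
    ((A ++ B).take i).sum = A.sum + (B.take (i - A.length)).sum := by
  rw [List.take_append, List.take_of_length_le h, List.sum_append]

lemma sum_take_append_left (A B : List ℤ) {i : ℕ} (h : i ≤ A.length) :
    ((A ++ B).take i).sum = (A.take i).sum := by
  rw [List.take_append, Nat.sub_eq_zero_of_le h, List.take_zero,
    List.append_nil]

lemma nn_take {L : List ℤ} (h : NN L) (i : ℕ) : NN (L.take i) := by
  intro j
  rw [List.take_take]
  exact h _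

lemma sum_take_drop (L : List ℤ) (i j : ℕ) :
    ((L.drop i).take j).sum = (L.take (i + j)).sum - (L.take i).sum := by
  rw [List.take_add, List.sum_append]; ring

lemma nn_drop_of_ge {L : List ℤ} (hL : NN L) {i : ℕ}
    (h : ∀ j, (L.take i).sum ≤ (L.take (i + j)).sum) : NN (L.drop i) := by
  intro j
  rw [sum_take_drop]
  have := h j
  omega

/-! ### ncard machinery -/

lemma ncard_prod (s t : Set (List ℤ)) : (s ×ˢ t).ncard = s.ncard * t.ncard := by
  rw [← Nat.card_coe_set_eq, ← Nat.card_coe_set_eq, ← Nat.card_coe_set_eq,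
    Nat.card_congr (Equiv.Set.prod s t), Nat.card_prod]

lemma ncard_biUnion_image
    (t : Finset (ℕ × ℕ)) (S T : ℕ → Set (List ℤ))
    (Φ : List ℤ → List ℤ → List ℤ)
    (hfinS : ∀ a, (S a).Finite) (hfinT : ∀ b, (T b).Finite)
    (hinj : ∀ p ∈ t, ∀ q ∈ t, ∀ A ∈ S (p : ℕ × ℕ).1, ∀ R ∈ T (p : ℕ × ℕ).2,
      ∀ A' ∈ S (q : ℕ × ℕ).1, ∀ R' ∈ T (q : ℕ × ℕ).2,
      Φ A R = Φ A' R' → p = q ∧ A = A' ∧ R = R') :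
    (⋃ p ∈ t, (fun x : List ℤ × List ℤ => Φ x.1 x.2) '' (S (p : ℕ × ℕ).1 ×ˢ T (p : ℕ × ℕ).2)).ncard
      = ∑ p ∈ t, (S (p : ℕ × ℕ).1).ncard * (T (p : ℕ × ℕ).2).ncard := by
  classical
  induction t using Finset.induction with
  | empty => simp
  | @insert a s ha ih =>
    rw [Finset.set_biUnion_insert, Finset.sum_insert ha]
    have hfin1 : ((fun x : List ℤ × List ℤ => Φ x.1 x.2) '' (S a.1 ×ˢ T a.2)).Finite :=
      (Set.Finite.prod (hfinS a.1) (hfinT a.2)).image _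
    have hfin2 : (⋃ p ∈ s, (fun x : List ℤ × List ℤ => Φ x.1 x.2) '' (S (p:ℕ×ℕ).1 ×ˢ T (p:ℕ×ℕ).2)).Finite := by
      apply Set.Finite.biUnion s.finite_toSet
      intro p _
      exact (Set.Finite.prod (hfinS p.1) (hfinT p.2)).image _
    have hdisj : Disjoint ((fun x : List ℤ × List ℤ => Φ x.1 x.2) '' (S a.1 ×ˢ T a.2))
        (⋃ p ∈ s, (fun x : List ℤ × List ℤ => Φ x.1 x.2) '' (S (p:ℕ×ℕ).1 ×ˢ T (p:ℕ×ℕ).2)) := by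
      rw [Set.disjoint_left]
      rintro x ⟨⟨A, R⟩, hAR, rfl⟩ hx
      simp only [Set.mem_iUnion] at hx
      obtain ⟨q, hq, ⟨A', R'⟩, hAR', hEq⟩ := hx
      have := hinj a (Finset.mem_insert_self a s) q (Finset.mem_insert_of_mem hq)
        A hAR.1 R hAR.2 A' hAR'.1 R' hAR'.2 hEq.symm
      exact ha (this.1 ▸ hq)
    rw [Set.ncard_union_eq hdisj hfin1 hfin2]
    congr 1
    · rw [Set.ncard_image_of_injOn, ncard_prod]
      rintro ⟨A, R⟩ hAR ⟨A', R'⟩ hAR' hEq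
      have := hinj a (Finset.mem_insert_self a s) a (Finset.mem_insert_self a s)
        A hAR.1 R hAR.2 A' hAR'.1 R' hAR'.2 hEq
      exact Prod.ext this.2.1 this.2.2
    · apply ih
      intro p hp q hq
      exact hinj p (Finset.mem_insert_of_mem hp) q (Finset.mem_insert_of_mem hq)


/-! ### the map `(A, R) ↦ A ++ 1 :: R` -/

/-- hill-free paths -/
def PF (k r m n : ℕ) : Set (List ℤ) := {L | L ∈ PS k m n ∧ ¬ HasHill k r L}

lemma finite_PF {k r m n : ℕ} (hk : 2 ≤ k) : (PF k r m n).Finite :=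
  (finite_PS hk).subset (fun _ h => h.1)

lemma count_up_cons {k : ℕ} (hk : 2 ≤ k) (R : List ℤ) :
    ((1 : ℤ) :: R).count (1 - (k:ℤ)) = R.count (1 - (k:ℤ)) := by
  rw [List.count_cons]
  simp [one_ne_down hk]

lemma mem_PS_append_up {k m a b : ℕ} (hk : 2 ≤ k) (hm : 1 ≤ m)
    {A R : List ℤ} (hA : A ∈ PS k 0 a) (hR : R ∈ PS k (m-1) b) :
    A ++ 1 :: R ∈ PS k m (a + b) := by
  obtain ⟨hAs, hAnn, hAsum, hAcount⟩ := hA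
  obtain ⟨hRs, hRnn, hRsum, hRcount⟩ := hR
  refine ⟨steps_append hAs (steps_cons (Or.inl rfl) hRs), ?_, ?_, ?_⟩
  · intro i
    rcases le_or_gt i A.length with h | h
    · rw [sum_take_append_left _ _ h]; exact hAnn i
    · rw [sum_take_append_right _ _ h.le]
      obtain ⟨j, hj⟩ : ∃ j, i - A.length = j + 1 := ⟨i - A.length - 1, by omega⟩
      rw [hj, List.take_succ_cons, List.sum_cons, hAsum]
      have := hRnn j
      omega
  · rw [List.sum_append, List.sum_cons, hAsum, hRsum]
    have : ((m - 1 : ℕ) : ℤ) = (m : ℤ) - 1 := by omega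
    rw [this]; ring
  · rw [List.count_append, count_up_cons hk, hAcount, hRcount]

lemma hasHill_append_up {k r : ℕ} {A R : List ℤ} (hAsum : A.sum = 0) (hR : NN R) :
    HasHill k r (A ++ 1 :: R) ↔ HasHill k r A := by
  constructor
  · rintro ⟨i, h1, h2, h3, h4⟩
    have hle : i + r + 1 ≤ A.length := by
      by_contra hgt
      push_neg at hgt
      rw [sum_take_append_right _ _ (by omega)] at h4
      obtain ⟨j, hj⟩ : ∃ j, i + r + 1 - A.length = j + 1 := ⟨i + r + 1 - A.length - 1, by omega⟩
      rw [hj, List.take_succ_cons, List.sum_cons, hAsum] at h4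
      have := hR j
      omega
    refine ⟨i, by omega, ?_, ?_, ?_⟩
    · intro j hj
      rw [← h2 j hj, List.getD_append _ _ _ _ (by omega)]
    · rw [← h3, List.getD_append _ _ _ _ (by omega)]
    · rw [← h4, sum_take_append_left _ _ hle]
  · rintro ⟨i, h1, h2, h3, h4⟩
    refine ⟨i, ?_, ?_, ?_, ?_⟩
    · rw [List.length_append]; omega
    · intro j hj
      rw [← h2 j hj, List.getD_append _ _ _ _ (by omega)]
    · rw [← h3, List.getD_append _ _ _ _ (by omega)]
    · rw [← h4, sum_take_append_left _ _ (by omega)]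

lemma up_split_inj_aux {A A' R R' : List ℤ}
    (hA : A.sum = 0) (hA' : A'.sum = 0) (hR : NN R)
    (hlt : A.length < A'.length)
    (h : A ++ 1 :: R = A' ++ 1 :: R') : False := by
  have h1 : ((A' ++ 1 :: R').take A'.length).sum = 0 := by
    rw [List.take_left, hA']
  rw [← h] at h1
  rw [sum_take_append_right _ _ hlt.le] at h1
  obtain ⟨j, hj⟩ : ∃ j, A'.length - A.length = j + 1 := ⟨A'.length - A.length - 1, by omega⟩
  rw [hj, List.take_succ_cons, List.sum_cons, hA] at h1
  have := hR j
  omega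

lemma up_split_inj {A A' R R' : List ℤ}
    (hA : A.sum = 0) (hA' : A'.sum = 0) (hR : NN R) (hR' : NN R')
    (h : A ++ 1 :: R = A' ++ 1 :: R') : A = A' ∧ R = R' := by
  rcases lt_trichotomy A.length A'.length with hl | hl | hl
  · exact (up_split_inj_aux hA hA' hR hl h).elim
  · obtain ⟨h1, h2⟩ := List.append_inj h hl
    exact ⟨h1, by injection h2⟩
  · exact (up_split_inj_aux hA' hA hR' hl h.symm).elim

lemma up_split_exists {k m n : ℕ} (hk : 2 ≤ k) (hm : 1 ≤ m) {L : List ℤ}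
    (hL : L ∈ PS k m n) :
    ∃ a b A R, a + b = n ∧ A ∈ PS k 0 a ∧ R ∈ PS k (m-1) b ∧ L = A ++ 1 :: R := by
  classical
  obtain ⟨hstep, hnn, hsum, hcount⟩ := hL
  set Z : Finset ℕ := (range (L.length + 1)).filter (fun i => (L.take i).sum = 0) with hZ
  have h0Z : 0 ∈ Z := by simp [hZ]
  set i₀ := Z.max' ⟨0, h0Z⟩ with hi₀
  have hi₀Z : i₀ ∈ Z := Z.max'_mem _
  rw [hZ, Finset.mem_filter, Finset.mem_range] at hi₀Z
  obtain ⟨hi₀le, hi₀sum⟩ := hi₀Z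
  have hmax : ∀ j ∈ Z, j ≤ i₀ := fun j hj => Z.le_max' j hj
  have hmlarge : (1 : ℤ) ≤ (m : ℤ) := by exact_mod_cast hm
  have hi₀len : i₀ < L.length := by
    rcases lt_or_eq_of_le (Nat.lt_succ_iff.1 hi₀le) with h | h
    · exact h
    · exfalso
      rw [h, List.take_of_length_le le_rfl, hsum] at hi₀sum
      omega
  have hstep₀ : L[i₀] = 1 := by
    rcases hstep L[i₀] (L.getElem_mem hi₀len) with h | h
    · exact h
    · exfalso
      have := hnn (i₀ + 1)
      rw [List.sum_take_succ _ _ hi₀len] at this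
      rw [h, hi₀sum] at this
      have : (2:ℤ) ≤ (k:ℤ) := by exact_mod_cast hk
      omega
  have hsum_take_succ : (L.take (i₀ + 1)).sum = 1 := by
    rw [List.sum_take_succ _ _ hi₀len, hstep₀, hi₀sum]; norm_num
  set A := L.take i₀ with hA
  set R := L.drop (i₀ + 1) with hR
  have hdecomp : L = A ++ 1 :: R := by
    conv_lhs => rw [← List.take_append_drop i₀ L]
    rw [List.drop_eq_getElem_cons hi₀len, hstep₀]
  have hRnn : NN R := by
    intro j
    rw [hR, sum_take_drop, hsum_take_succ]
    rcases le_or_gt L.length (i₀ + 1 + j) with hr | hr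
    · rw [List.take_of_length_le hr, hsum]; omega
    · have hge := hnn (i₀ + 1 + j)
      have hne : (L.take (i₀ + 1 + j)).sum ≠ 0 := by
        intro h0
        have : i₀ + 1 + j ∈ Z := by
          rw [hZ, Finset.mem_filter, Finset.mem_range]
          exact ⟨by omega, h0⟩
        have := hmax _ this
        omega
      omega
  have hRsum : R.sum = ((m - 1 : ℕ) : ℤ) := by
    have : L.sum = A.sum + (1 + R.sum) := by rw [hdecomp]; simp
    rw [hsum, hA, hi₀sum] at this
    omega
  refine ⟨A.count (1 - (k:ℤ)), R.count (1 - (k:ℤ)), A, R, ?_, ?_, ?_, hdecomp⟩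
  · rw [← hcount, hdecomp, List.count_append, count_up_cons hk]
  · exact ⟨steps_take hstep i₀, nn_take hnn i₀, hi₀sum, rfl⟩
  · exact ⟨steps_drop hstep (i₀+1), hRnn, hRsum, rfl⟩

lemma PS_decomp_up {k m n : ℕ} (hk : 2 ≤ k) (hm : 1 ≤ m) :
    PS k m n = ⋃ p ∈ antidiagonal n,
      (fun x : List ℤ × List ℤ => x.1 ++ 1 :: x.2) ''
        (PS k 0 (p : ℕ × ℕ).1 ×ˢ PS k (m-1) (p : ℕ × ℕ).2) := by
  ext L
  simp only [Set.mem_iUnion, Set.mem_image, Set.mem_prod, Finset.HasAntidiagonal.mem_antidiagonal]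
  constructor
  · intro hL
    obtain ⟨a, b, A, R, hab, hA, hR, hdec⟩ := up_split_exists hk hm hL
    exact ⟨(a, b), hab, (A, R), ⟨hA, hR⟩, hdec.symm⟩
  · rintro ⟨⟨a, b⟩, hab, ⟨A, R⟩, ⟨hA, hR⟩, rfl⟩
    have := mem_PS_append_up hk hm hA hR
    rwa [hab] at this

lemma PF_decomp_up {k r m n : ℕ} (hk : 2 ≤ k) (hm : 1 ≤ m) :
    PF k r m n = ⋃ p ∈ antidiagonal n,
      (fun x : List ℤ × List ℤ => x.1 ++ 1 :: x.2) ''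
        (PF k r 0 (p : ℕ × ℕ).1 ×ˢ PS k (m-1) (p : ℕ × ℕ).2) := by
  ext L
  simp only [Set.mem_iUnion, Set.mem_image, Set.mem_prod, Finset.HasAntidiagonal.mem_antidiagonal]
  constructor
  · rintro ⟨hL, hnh⟩
    obtain ⟨a, b, A, R, hab, hA, hR, hdec⟩ := up_split_exists hk hm hL
    have hAnh : ¬ HasHill k r A := by
      rw [← hasHill_append_up hA.2.2.1 hR.2.1, ← hdec]
      exact hnh
    exact ⟨(a, b), hab, (A, R), ⟨⟨hA, hAnh⟩, hR⟩, hdec.symm⟩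
  · rintro ⟨⟨a, b⟩, hab, ⟨A, R⟩, ⟨⟨hA, hAnh⟩, hR⟩, rfl⟩
    refine ⟨?_, ?_⟩
    · have := mem_PS_append_up hk hm hA hR
      rwa [hab] at this
    · rw [hasHill_append_up hA.2.2.1 hR.2.1]
      exact hAnh

lemma card_PS_up {k m n : ℕ} (hk : 2 ≤ k) (hm : 1 ≤ m) :
    (PS k m n).ncard = ∑ p ∈ antidiagonal n,
      (PS k 0 (p : ℕ × ℕ).1).ncard * (PS k (m-1) (p : ℕ × ℕ).2).ncard := by
  rw [PS_decomp_up hk hm]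
  refine ncard_biUnion_image (antidiagonal n) (fun a => PS k 0 a) (fun b => PS k (m-1) b)
    (fun A R => A ++ 1 :: R) (fun a => finite_PS hk) (fun b => finite_PS hk) ?_
  intro p _ q _ A hA R hR A' hA' R' hR' hEq
  obtain ⟨h1, h2⟩ := up_split_inj hA.2.2.1 hA'.2.2.1 hR.2.1 hR'.2.1 hEq
  refine ⟨?_, h1, h2⟩
  have e1 : p.1 = q.1 := by rw [← hA.2.2.2, ← hA'.2.2.2, h1]
  have e2 : p.2 = q.2 := by rw [← hR.2.2.2, ← hR'.2.2.2, h2]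
  exact Prod.ext e1 e2

lemma card_PF_up {k r m n : ℕ} (hk : 2 ≤ k) (hm : 1 ≤ m) :
    (PF k r m n).ncard = ∑ p ∈ antidiagonal n,
      (PF k r 0 (p : ℕ × ℕ).1).ncard * (PS k (m-1) (p : ℕ × ℕ).2).ncard := by
  rw [PF_decomp_up hk hm]
  refine ncard_biUnion_image (antidiagonal n) (fun a => PF k r 0 a) (fun b => PS k (m-1) b)
    (fun A R => A ++ 1 :: R) (fun a => finite_PF hk) (fun b => finite_PS hk) ?_
  intro p _ q _ A hA R hR A' hA' R' hR' hEq
  obtain ⟨h1, h2⟩ := up_split_inj hA.1.2.2.1 hA'.1.2.2.1 hR.2.1 hR'.2.1 hEq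
  refine ⟨?_, h1, h2⟩
  have e1 : p.1 = q.1 := by rw [← hA.1.2.2.2, ← hA'.1.2.2.2, h1]
  have e2 : p.2 = q.2 := by rw [← hR.2.2.2, ← hR'.2.2.2, h2]
  exact Prod.ext e1 e2


/-! ### the map `(M, B) ↦ 1 :: (M ++ (1-k) :: B)` (first-return decomposition) -/

lemma down_cast {k : ℕ} (hk : 2 ≤ k) : ((k - 2 : ℕ) : ℤ) = (k : ℤ) - 2 := by omega

lemma mem_PS_first {k a b : ℕ} (hk : 2 ≤ k) {M B : List ℤ}
    (hM : M ∈ PS k (k-2) a) (hB : B ∈ PS k 0 b) :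
    (1 : ℤ) :: (M ++ (1 - (k:ℤ)) :: B) ∈ PS k 0 (a + b + 1) := by
  obtain ⟨hMs, hMnn, hMsum, hMcount⟩ := hM
  obtain ⟨hBs, hBnn, hBsum, hBcount⟩ := hB
  rw [down_cast hk] at hMsum
  refine ⟨steps_cons (Or.inl rfl) (steps_append hMs (steps_cons (Or.inr rfl) hBs)), ?_, ?_, ?_⟩
  · intro i
    cases i with
    | zero => simp
    | succ j =>
      rw [List.take_succ_cons, List.sum_cons]
      rcases le_or_gt j M.length with h | h
      · rw [sum_take_append_left _ _ h]
        have := hMnn j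
        omega
      · rw [sum_take_append_right _ _ h.le]
        obtain ⟨j', hj'⟩ : ∃ j', j - M.length = j' + 1 := ⟨j - M.length - 1, by omega⟩
        rw [hj', List.take_succ_cons, List.sum_cons, hMsum]
        have := hBnn j'
        omega
  · rw [List.sum_cons, List.sum_append, List.sum_cons, hMsum, hBsum]
    push_cast
    ring
  · rw [List.count_cons, List.count_append, List.count_cons]
    simp [one_ne_down hk, hMcount, hBcount]
    omega

lemma first_split_inj_aux {k : ℕ} (hk : 2 ≤ k) {M M' B B' : List ℤ}
    (hM : M.sum = (k:ℤ) - 2) (hM' : NN M')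
    (hlt : M.length < M'.length)
    (h : M ++ (1 - (k:ℤ)) :: B = M' ++ (1 - (k:ℤ)) :: B') : False := by
  have h1 : ((M ++ (1 - (k:ℤ)) :: B).take (M.length + 1)).sum = -1 := by
    rw [sum_take_append_right _ _ (by omega)]
    have : M.length + 1 - M.length = 0 + 1 := by omega
    rw [this, List.take_succ_cons, List.sum_cons, hM]
    simp
  rw [h, sum_take_append_left _ _ (by omega)] at h1
  have := hM' (M.length + 1)
  omega

lemma first_split_inj {k : ℕ} (hk : 2 ≤ k) {M M' B B' : List ℤ}
    (hM : M.sum = (k:ℤ) - 2) (hM'' : M'.sum = (k:ℤ) - 2)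
    (hMnn : NN M) (hM'nn : NN M')
    (h : M ++ (1 - (k:ℤ)) :: B = M' ++ (1 - (k:ℤ)) :: B') : M = M' ∧ B = B' := by
  rcases lt_trichotomy M.length M'.length with hl | hl | hl
  · exact (first_split_inj_aux hk hM hM'nn hl h).elim
  · obtain ⟨h1, h2⟩ := List.append_inj h hl
    exact ⟨h1, by injection h2⟩
  · exact (first_split_inj_aux hk hM'' hMnn hl h.symm).elim

lemma first_split_exists {k n : ℕ} (hk : 2 ≤ k) (hn : 1 ≤ n) {L : List ℤ}
    (hL : L ∈ PS k 0 n) :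
    ∃ a b M B, a + b = n - 1 ∧ M ∈ PS k (k-2) a ∧ B ∈ PS k 0 b ∧
      L = (1:ℤ) :: (M ++ (1 - (k:ℤ)) :: B) := by
  classical
  have hlen : L.length = k * n := by
    have := length_of_mem_PS hk hL
    omega
  obtain ⟨hstep, hnn, hsum, hcount⟩ := hL
  have hlenpos : 0 < L.length := by
    rw [hlen]
    exact Nat.mul_pos (by omega) hn
  set W : Finset ℕ :=
    (range (L.length + 1)).filter (fun i => 0 < i ∧ (L.take i).sum = 0) with hW
  have hWne : L.length ∈ W := by
    rw [hW, Finset.mem_filter, Finset.mem_range]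
    refine ⟨by omega, hlenpos, by rw [List.take_of_length_le le_rfl, hsum]; simp⟩
  set i₁ := W.min' ⟨L.length, hWne⟩ with hi₁
  have hi₁W : i₁ ∈ W := W.min'_mem _
  rw [hW, Finset.mem_filter, Finset.mem_range] at hi₁W
  obtain ⟨hi₁le, hi₁pos, hi₁sum⟩ := hi₁W
  have hmin : ∀ j ∈ W, i₁ ≤ j := fun j hj => W.min'_le j hj
  have hpos : ∀ j, 0 < j → j < i₁ → 1 ≤ (L.take j).sum := by
    intro j hj1 hj2
    have hge := hnn j
    have hne : (L.take j).sum ≠ 0 := by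
      intro h0
      have : j ∈ W := by
        rw [hW, Finset.mem_filter, Finset.mem_range]
        exact ⟨by omega, hj1, h0⟩
      have := hmin _ this
      omega
    omega
  have hkk : (2:ℤ) ≤ (k:ℤ) := by exact_mod_cast hk
  have hstep0 : L[0] = 1 := by
    rcases hstep L[0] (L.getElem_mem hlenpos) with h | h
    · exact h
    · exfalso
      have := hnn 1
      rw [List.sum_take_succ _ _ hlenpos] at this
      simp only [List.take_zero, List.sum_nil] at this
      rw [h] at this
      omega
  have hsum1 : (L.take 1).sum = 1 := by
    rw [List.sum_take_succ _ _ hlenpos, hstep0]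
    simp
  have hi₁2 : 2 ≤ i₁ := by
    by_contra hcon
    push_neg at hcon
    have h1 : i₁ = 1 := by omega
    rw [h1, hsum1] at hi₁sum
    omega
  have hi₁pred : i₁ - 1 < L.length := by omega
  have hsumpred : (L.take (i₁ - 1)).sum + L[i₁ - 1] = 0 := by
    have : (L.take (i₁ - 1 + 1)).sum = (L.take (i₁-1)).sum + L[i₁-1] :=
      List.sum_take_succ _ _ hi₁pred
    rw [show i₁ - 1 + 1 = i₁ by omega] at this
    rw [← this, hi₁sum]
  have hsteplast : L[i₁ - 1] = 1 - (k:ℤ) := by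
    rcases hstep L[i₁-1] (L.getElem_mem hi₁pred) with h | h
    · exfalso
      have := hpos (i₁ - 1) (by omega) (by omega)
      rw [h] at hsumpred
      omega
    · exact h
  set M := (L.drop 1).take (i₁ - 2) with hM
  set B := L.drop i₁ with hB
  have hdecomp : L = (1:ℤ) :: (M ++ (1 - (k:ℤ)) :: B) := by
    conv_lhs => rw [← List.take_append_drop 1 L]
    have ht1 : L.take 1 = [(1:ℤ)] := by
      rw [List.take_one]
      cases L with
      | nil => simp at hlenpos
      | cons x L' =>
        simp only [List.head?_cons, Option.toList_some]
        have : (x :: L')[0] = x := rfl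
        rw [← this, hstep0]
    rw [ht1]
    have ht2 : L.drop 1 = M ++ (1 - (k:ℤ)) :: B := by
      conv_lhs => rw [← List.take_append_drop (i₁ - 2) (L.drop 1)]
      congr 1
      rw [List.drop_drop]
      rw [show 1 + (i₁ - 2) = i₁ - 1 by omega]
      rw [List.drop_eq_getElem_cons hi₁pred, hsteplast, hB,
        show i₁ - 1 + 1 = i₁ by omega]
    rw [ht2]
    rfl
  have hMsum : M.sum = ((k - 2 : ℕ) : ℤ) := by
    rw [hM, sum_take_drop, show 1 + (i₁ - 2) = i₁ - 1 by omega, hsum1]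
    rw [hsteplast] at hsumpred
    omega
  have hMnn : NN M := by
    intro j
    rw [hM, List.take_take, sum_take_drop, hsum1]
    have h1 : 0 < 1 + min j (i₁ - 2) := by omega
    have h2 : 1 + min j (i₁ - 2) < i₁ := by omega
    have := hpos _ h1 h2
    omega
  have hBsum : B.sum = ((0:ℕ):ℤ) := by
    have : L.sum = (L.take i₁).sum + (L.drop i₁).sum := by
      rw [← List.sum_append, List.take_append_drop]
    rw [hsum, hi₁sum] at this
    rw [hB]
    simp
    omega
  have hBnn : NN B := by
    intro j
    rw [hB, sum_take_drop, hi₁sum]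
    have := hnn (i₁ + j)
    omega
  refine ⟨M.count (1 - (k:ℤ)), B.count (1 - (k:ℤ)), M, B, ?_, ?_, ?_, hdecomp⟩
  · have : L.count (1 - (k:ℤ)) =
        M.count (1 - (k:ℤ)) + B.count (1 - (k:ℤ)) + 1 := by
      rw [hdecomp, List.count_cons, List.count_append, List.count_cons]
      simp [one_ne_down hk]
      omega
    rw [hcount] at this
    omega
  · exact ⟨steps_take (steps_drop hstep 1) _, hMnn, hMsum, rfl⟩
  · exact ⟨steps_drop hstep i₁, hBnn, hBsum, rfl⟩

lemma PS_zero (k : ℕ) (hk : 2 ≤ k) : PS k 0 0 = {([] : List ℤ)} := by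
  ext L
  constructor
  · intro hL
    have := length_of_mem_PS hk hL
    simp only [Nat.mul_zero, Nat.add_zero] at this
    exact List.length_eq_zero_iff.1 this
  · rintro rfl
    exact ⟨fun s hs => absurd hs List.not_mem_nil, fun i => by simp, by simp, by simp⟩

lemma card_PS_zero (k : ℕ) (hk : 2 ≤ k) : (PS k 0 0).ncard = 1 := by
  rw [PS_zero k hk, Set.ncard_singleton]

lemma card_PS_first {k n : ℕ} (hk : 2 ≤ k) (hn : 1 ≤ n) :
    (PS k 0 n).ncard = ∑ p ∈ antidiagonal (n - 1),
      (PS k (k-2) (p : ℕ × ℕ).1).ncard * (PS k 0 (p : ℕ × ℕ).2).ncard := by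
  have hset : PS k 0 n = ⋃ p ∈ antidiagonal (n-1),
      (fun x : List ℤ × List ℤ => (1:ℤ) :: (x.1 ++ (1 - (k:ℤ)) :: x.2)) ''
        (PS k (k-2) (p : ℕ × ℕ).1 ×ˢ PS k 0 (p : ℕ × ℕ).2) := by
    ext L
    simp only [Set.mem_iUnion, Set.mem_image, Set.mem_prod, Finset.HasAntidiagonal.mem_antidiagonal]
    constructor
    · intro hL
      obtain ⟨a, b, M, B, hab, hM, hB, hdec⟩ := first_split_exists hk hn hL
      exact ⟨(a, b), hab, (M, B), ⟨hM, hB⟩, hdec.symm⟩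
    · rintro ⟨⟨a, b⟩, hab, ⟨M, B⟩, ⟨hM, hB⟩, rfl⟩
      have := mem_PS_first hk hM hB
      rwa [show a + b + 1 = n by omega] at this
  rw [hset]
  refine ncard_biUnion_image (antidiagonal (n-1)) (fun a => PS k (k-2) a) (fun b => PS k 0 b)
    (fun M B => (1:ℤ) :: (M ++ (1 - (k:ℤ)) :: B)) (fun a => finite_PS hk)
    (fun b => finite_PS hk) ?_
  intro p _ q _ M hM B hB M' hM' B' hB' hEq
  have hEq' : M ++ (1 - (k:ℤ)) :: B = M' ++ (1 - (k:ℤ)) :: B' := by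
    injection hEq
  have c1 : M.sum = (k:ℤ) - 2 := by rw [hM.2.2.1, down_cast hk]
  have c2 : M'.sum = (k:ℤ) - 2 := by rw [hM'.2.2.1, down_cast hk]
  obtain ⟨h1, h2⟩ := first_split_inj hk c1 c2 hM.2.1 hM'.2.1 hEq'
  refine ⟨?_, h1, h2⟩
  have e1 : p.1 = q.1 := by rw [← hM.2.2.2, ← hM'.2.2.2, h1]
  have e2 : p.2 = q.2 := by rw [← hB.2.2.2, ← hB'.2.2.2, h2]
  exact Prod.ext e1 e2


/-! ### the map `(P, B) ↦ P ++ (replicate r 1 ++ (1-k) :: B)` (first-hill decomposition) -/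

lemma steps_replicate {k r : ℕ} : Steps k (List.replicate r (1:ℤ)) := by
  intro s hs
  exact Or.inl (List.eq_of_mem_replicate hs)

lemma sum_take_replicate (j r : ℕ) :
    ((List.replicate r (1:ℤ)).take j).sum = ((min j r : ℕ) : ℤ) := by
  rw [List.take_replicate, List.sum_replicate]
  simp

lemma sum_replicate_one (r : ℕ) : (List.replicate r (1:ℤ)).sum = (r : ℤ) := by
  rw [List.sum_replicate]; simp

lemma count_replicate_one {k r : ℕ} (hk : 2 ≤ k) :
    (List.replicate r (1:ℤ)).count (1 - (k:ℤ)) = 0 := by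
  rw [List.count_eq_zero]
  intro h
  exact one_ne_down hk (List.eq_of_mem_replicate h).symm

lemma hr_cast {k r : ℕ} (hk : 2 ≤ k) (hr2 : r ≤ k - 1) :
    ((k - 1 - r : ℕ) : ℤ) = (k:ℤ) - 1 - (r:ℤ) := by omega

lemma mem_PS_hill {k r a b : ℕ} (hk : 2 ≤ k) (hr2 : r ≤ k - 1)
    {P B : List ℤ} (hP : P ∈ PS k (k-1-r) a) (hB : B ∈ PS k 0 b) :
    P ++ (List.replicate r 1 ++ (1 - (k:ℤ)) :: B) ∈ PS k 0 (a + b + 1) := by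
  obtain ⟨hPs, hPnn, hPsum, hPcount⟩ := hP
  obtain ⟨hBs, hBnn, hBsum, hBcount⟩ := hB
  rw [hr_cast hk hr2] at hPsum
  have hrk : (r:ℤ) ≤ (k:ℤ) - 1 := by omega
  refine ⟨steps_append hPs (steps_append steps_replicate (steps_cons (Or.inr rfl) hBs)),
    ?_, ?_, ?_⟩
  · intro i
    rcases le_or_gt i P.length with h | h
    · rw [sum_take_append_left _ _ h]; exact hPnn i
    · rw [sum_take_append_right _ _ h.le, hPsum]
      set j := i - P.length with hj
      rcases le_or_gt j r with h2 | h2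
      · rw [sum_take_append_left _ _ (by rw [List.length_replicate]; exact h2),
          sum_take_replicate]
        omega
      · rw [sum_take_append_right _ _ (by rw [List.length_replicate]; omega),
          sum_replicate_one, List.length_replicate]
        obtain ⟨j', hj'⟩ : ∃ j', j - r = j' + 1 := ⟨j - r - 1, by omega⟩
        rw [hj', List.take_succ_cons, List.sum_cons]
        have := hBnn j'
        omega
  · rw [List.sum_append, List.sum_append, List.sum_cons, hPsum, sum_replicate_one, hBsum]
    push_cast
    ring
  · rw [List.count_append, List.count_append, List.count_cons, count_replicate_one hk,
      hPcount, hBcount]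
    simp
    omega

lemma hill_at {k r : ℕ} (hk : 2 ≤ k) (hr2 : r ≤ k - 1)
    {P B : List ℤ} (hPsum : P.sum = (k:ℤ) - 1 - r) (hBsum : B.sum = 0) :
    let L := P ++ (List.replicate r 1 ++ (1 - (k:ℤ)) :: B)
    P.length + r < L.length ∧ (∀ j < r, L.getD (P.length + j) 0 = 1) ∧
      L.getD (P.length + r) 0 = 1 - (k:ℤ) ∧ (L.take (P.length + r + 1)).sum = 0 := by
  intro L
  have hlen : L.length = P.length + r + 1 + B.length := by
    simp [L, List.length_append]
    omega
  refine ⟨by omega, ?_, ?_, ?_⟩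
  · intro j hj
    rw [List.getD_append_right _ _ _ _ (by omega), Nat.add_sub_cancel_left]
    rw [List.getD_append _ _ _ _ (by rw [List.length_replicate]; omega)]
    rw [List.getD_eq_getElem _ _ (by rw [List.length_replicate]; omega)]
    simp
  · rw [List.getD_append_right _ _ _ _ (by omega), Nat.add_sub_cancel_left]
    rw [List.getD_append_right _ _ _ _ (by rw [List.length_replicate])]
    simp
  · rw [sum_take_append_right _ _ (by omega), hPsum,
      show P.length + r + 1 - P.length = r + 1 by omega,
      sum_take_append_right _ _ (by rw [List.length_replicate]; omega),
      sum_replicate_one, List.length_replicate,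
      show r + 1 - r = 0 + 1 by omega, List.take_succ_cons, List.sum_cons]
    simp
    ring

lemma hill_ge {k r : ℕ} (hk : 2 ≤ k) (hr1 : 1 ≤ r) (hr2 : r ≤ k - 1)
    {P B : List ℤ} (hPsum : P.sum = (k:ℤ) - 1 - r) (hPnh : ¬ HasHill k r P)
    {i : ℕ}
    (h2 : ∀ j < r, (P ++ (List.replicate r 1 ++ (1 - (k:ℤ)) :: B)).getD (i + j) 0 = 1)
    (h3 : (P ++ (List.replicate r 1 ++ (1 - (k:ℤ)) :: B)).getD (i + r) 0 = 1 - (k:ℤ))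
    (h4 : ((P ++ (List.replicate r 1 ++ (1 - (k:ℤ)) :: B)).take (i + r + 1)).sum = 0) :
    P.length ≤ i := by
  by_contra hlt
  push_neg at hlt
  set L := P ++ (List.replicate r 1 ++ (1 - (k:ℤ)) :: B) with hL
  rcases le_or_gt (i + r + 1) P.length with hcase | hcase
  · apply hPnh
    refine ⟨i, by omega, ?_, ?_, ?_⟩
    · intro j hj
      rw [← h2 j hj, hL, List.getD_append _ _ _ _ (by omega)]
    · rw [← h3, hL, List.getD_append _ _ _ _ (by omega)]
    · rw [← h4, hL, sum_take_append_left _ _ hcase]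
  · -- P.length < i + r + 1 ≤ P.length + r, so the sum at that point is positive
    have hle : i + r + 1 - P.length ≤ r := by omega
    rw [hL, sum_take_append_right _ _ (by omega), hPsum,
      sum_take_append_left _ _ (by rw [List.length_replicate]; exact hle),
      sum_take_replicate] at h4
    omega


lemma hill_split_inj {k r : ℕ} (hk : 2 ≤ k) (hr1 : 1 ≤ r) (hr2 : r ≤ k - 1)
    {P P' B B' : List ℤ}
    (hPsum : P.sum = (k:ℤ) - 1 - r) (hPnh : ¬ HasHill k r P)
    (hP'sum : P'.sum = (k:ℤ) - 1 - r) (hP'nh : ¬ HasHill k r P')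
    (hBsum : B.sum = 0) (hB'sum : B'.sum = 0)
    (h : P ++ (List.replicate r 1 ++ (1 - (k:ℤ)) :: B)
       = P' ++ (List.replicate r 1 ++ (1 - (k:ℤ)) :: B')) : P = P' ∧ B = B' := by
  have hlen : P.length = P'.length := by
    obtain ⟨-, c2, c3, c4⟩ := hill_at hk hr2 hPsum hBsum (B := B)
    obtain ⟨-, c2', c3', c4'⟩ := hill_at hk hr2 hP'sum hB'sum (B := B')
    rw [h] at c2 c3 c4
    rw [← h] at c2' c3' c4'
    have g1 := hill_ge hk hr1 hr2 hP'sum hP'nh c2 c3 c4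
    have g2 := hill_ge hk hr1 hr2 hPsum hPnh c2' c3' c4'
    omega
  obtain ⟨h1, h2⟩ := List.append_inj h hlen
  refine ⟨h1, ?_⟩
  have := List.append_inj h2 rfl
  exact by injection this.2

lemma hill_split_exists {k r n : ℕ} (hk : 2 ≤ k) (hr1 : 1 ≤ r) (hr2 : r ≤ k - 1)
    {L : List ℤ} (hL : L ∈ PS k 0 n) (hhill : HasHill k r L) :
    ∃ a b P B, a + b = n - 1 ∧ 1 ≤ n ∧
      P ∈ PS k (k-1-r) a ∧ ¬ HasHill k r P ∧ B ∈ PS k 0 b ∧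
      L = P ++ (List.replicate r 1 ++ (1 - (k:ℤ)) :: B) := by
  classical
  obtain ⟨hstep, hnn, hsum, hcount⟩ := hL
  set H : Finset ℕ := (range L.length).filter
    (fun i => i + r < L.length ∧ (∀ j < r, L.getD (i+j) 0 = 1) ∧
      L.getD (i+r) 0 = 1 - (k:ℤ) ∧ (L.take (i+r+1)).sum = 0) with hH
  have hHne : H.Nonempty := by
    obtain ⟨i, h1, h2, h3, h4⟩ := hhill
    exact ⟨i, by rw [hH, Finset.mem_filter, Finset.mem_range]; exact ⟨by omega, h1, h2, h3, h4⟩⟩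
  set i₂ := H.min' hHne with hi₂
  have hi₂H : i₂ ∈ H := H.min'_mem _
  rw [hH, Finset.mem_filter, Finset.mem_range] at hi₂H
  obtain ⟨hi₂len, h1, h2, h3, h4⟩ := hi₂H
  have hmin : ∀ j ∈ H, i₂ ≤ j := fun j hj => H.min'_le j hj
  set P := L.take i₂ with hP
  set B := L.drop (i₂ + r + 1) with hB
  have hrep : (L.drop i₂).take r = List.replicate r 1 := by
    rw [List.eq_replicate_iff]
    constructor
    · rw [List.length_take, List.length_drop]
      omega
    · intro b hb
      obtain ⟨j, hj, hjeq⟩ := List.mem_iff_getElem.1 hb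
      have hjlen : j < r := by
        rw [List.length_take, List.length_drop] at hj
        omega
      have : ((L.drop i₂).take r)[j] = L[i₂ + j]'(by omega) := by
        rw [List.getElem_take, List.getElem_drop]
      rw [this] at hjeq
      rw [← hjeq, ← List.getD_eq_getElem _ 0 (by omega)]
      exact h2 j hjlen
  have hdecomp : L = P ++ (List.replicate r 1 ++ (1 - (k:ℤ)) :: B) := by
    conv_lhs => rw [← List.take_append_drop i₂ L]
    congr 1
    conv_lhs => rw [← List.take_append_drop r (L.drop i₂)]
    rw [hrep]
    congr 1
    rw [List.drop_drop]
    rw [List.drop_eq_getElem_cons (by omega), hB]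
    congr 1
    rw [← List.getD_eq_getElem _ 0 (by omega)]
    exact h3
  have hPsum : P.sum = ((k - 1 - r : ℕ):ℤ) := by
    have := h4
    rw [hdecomp, sum_take_append_right _ _ (by rw [hP, List.length_take]; omega)] at this
    rw [show i₂ + r + 1 - P.length = r + 1 by rw [hP, List.length_take]; omega,
      sum_take_append_right _ _ (by rw [List.length_replicate]; omega),
      sum_replicate_one, List.length_replicate,
      show r + 1 - r = 0 + 1 by omega, List.take_succ_cons, List.sum_cons] at this
    simp at this
    omega
  have hPnh : ¬ HasHill k r P := by
    rintro ⟨i', c1, c2, c3, c4⟩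
    have hlenP : P.length = i₂ := by rw [hP, List.length_take]; omega
    have : i' ∈ H := by
      rw [hH, Finset.mem_filter, Finset.mem_range]
      have e2 : ∀ j < r, L.getD (i' + j) 0 = 1 := by
        intro j hj
        rw [← c2 j hj, hP, ← List.take_append_drop i₂ L,
          List.getD_append _ _ _ _ (by rw [List.length_take]; omega)]
        rw [List.take_append_drop]
      have e3 : L.getD (i' + r) 0 = 1 - (k:ℤ) := by
        rw [← c3, hP, ← List.take_append_drop i₂ L,
          List.getD_append _ _ _ _ (by rw [List.length_take]; omega)]
        rw [List.take_append_drop]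
      have e4 : (L.take (i' + r + 1)).sum = 0 := by
        rw [← c4, hP, List.take_take, show min (i' + r + 1) i₂ = i' + r + 1 by omega]
      exact ⟨by omega, by omega, e2, e3, e4⟩
    have := hmin _ this
    omega
  have hBsum : B.sum = ((0:ℕ):ℤ) := by
    have : L.sum = (L.take (i₂ + r + 1)).sum + (L.drop (i₂ + r + 1)).sum := by
      rw [← List.sum_append, List.take_append_drop]
    rw [hsum, h4] at this
    rw [hB]
    simp
    omega
  have hBnn : NN B := by
    intro j
    rw [hB, sum_take_drop, h4]
    have := hnn (i₂ + r + 1 + j)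
    omega
  have hcount' : L.count (1 - (k:ℤ)) =
      P.count (1 - (k:ℤ)) + B.count (1 - (k:ℤ)) + 1 := by
    rw [hdecomp, List.count_append, List.count_append, List.count_cons,
      count_replicate_one hk]
    simp
    omega
  rw [hcount] at hcount'
  refine ⟨P.count (1 - (k:ℤ)), B.count (1 - (k:ℤ)), P, B, by omega, by omega, ?_, hPnh, ?_,
    hdecomp⟩
  · exact ⟨steps_take hstep i₂, nn_take hnn i₂, hPsum, rfl⟩
  · exact ⟨steps_drop hstep _, hBnn, hBsum, rfl⟩

lemma card_PS_hill {k r n : ℕ} (hk : 2 ≤ k) (hr1 : 1 ≤ r) (hr2 : r ≤ k - 1) (hn : 1 ≤ n) :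
    (PS k 0 n ∩ {L | HasHill k r L}).ncard = ∑ p ∈ antidiagonal (n - 1),
      (PF k r (k-1-r) (p : ℕ × ℕ).1).ncard * (PS k 0 (p : ℕ × ℕ).2).ncard := by
  have hset : PS k 0 n ∩ {L | HasHill k r L} = ⋃ p ∈ antidiagonal (n-1),
      (fun x : List ℤ × List ℤ => x.1 ++ (List.replicate r 1 ++ (1 - (k:ℤ)) :: x.2)) ''
        (PF k r (k-1-r) (p : ℕ × ℕ).1 ×ˢ PS k 0 (p : ℕ × ℕ).2) := by
    ext L
    simp only [Set.mem_iUnion, Set.mem_image, Set.mem_prod, Finset.HasAntidiagonal.mem_antidiagonal,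
      Set.mem_inter_iff, Set.mem_setOf_eq]
    constructor
    · rintro ⟨hL, hhill⟩
      obtain ⟨a, b, P, B, hab, hn1, hPmem, hPnh, hBmem, hdec⟩ :=
        hill_split_exists hk hr1 hr2 hL hhill
      exact ⟨(a, b), hab, (P, B), ⟨⟨hPmem, hPnh⟩, hBmem⟩, hdec.symm⟩
    · rintro ⟨⟨a, b⟩, hab, ⟨P, B⟩, ⟨⟨hPmem, hPnh⟩, hBmem⟩, rfl⟩
      constructor
      · have := mem_PS_hill hk hr2 hPmem hBmem
        rwa [show a + b + 1 = n by omega] at this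
      · obtain ⟨c1, c2, c3, c4⟩ := hill_at hk hr2
          (by rw [hPmem.2.2.1, hr_cast hk hr2]) hBmem.2.2.1
        exact ⟨P.length, c1, c2, c3, c4⟩
  rw [hset]
  refine ncard_biUnion_image (antidiagonal (n-1)) (fun a => PF k r (k-1-r) a)
    (fun b => PS k 0 b)
    (fun P B => P ++ (List.replicate r 1 ++ (1 - (k:ℤ)) :: B)) (fun a => finite_PF hk)
    (fun b => finite_PS hk) ?_
  intro p _ q _ P hP B hB P' hP' B' hB' hEq
  obtain ⟨h1, h2⟩ := hill_split_inj hk hr1 hr2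
    (by rw [hP.1.2.2.1, hr_cast hk hr2]) hP.2
    (by rw [hP'.1.2.2.1, hr_cast hk hr2]) hP'.2
    hB.2.2.1 hB'.2.2.1 hEq
  refine ⟨?_, h1, h2⟩
  have e1 : p.1 = q.1 := by rw [← hP.1.2.2.2, ← hP'.1.2.2.2, h1]
  have e2 : p.2 = q.2 := by rw [← hB.2.2.2, ← hB'.2.2.2, h2]
  exact Prod.ext e1 e2

lemma card_PS_eq_PF_add_hill {k r n : ℕ} (hk : 2 ≤ k) :
    (PS k 0 n).ncard = (PF k r 0 n).ncard + (PS k 0 n ∩ {L | HasHill k r L}).ncard := by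
  have hsplit : PS k 0 n = PF k r 0 n ∪ (PS k 0 n ∩ {L | HasHill k r L}) := by
    ext L
    simp only [Set.mem_union, Set.mem_inter_iff, Set.mem_setOf_eq, PF, Set.mem_setOf_eq]
    tauto
  have hdisj : Disjoint (PF k r 0 n) (PS k 0 n ∩ {L | HasHill k r L}) := by
    rw [Set.disjoint_left]
    rintro L ⟨hL1, hL2⟩ ⟨hL3, hL4⟩
    exact hL2 hL4
  conv_lhs => rw [hsplit]
  exact Set.ncard_union_eq hdisj (finite_PF hk)
    ((finite_PS hk).subset Set.inter_subset_left)


/-! ### generating functions -/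

noncomputable def e (k m : ℕ) : PowerSeries ℚ :=
  PowerSeries.mk fun n => ((PS k m n).ncard : ℚ)

noncomputable def g (k r m : ℕ) : PowerSeries ℚ :=
  PowerSeries.mk fun n => ((PF k r m n).ncard : ℚ)

lemma coeff_e (k m n : ℕ) : (PowerSeries.coeff n) (e k m) = ((PS k m n).ncard : ℚ) :=
  PowerSeries.coeff_mk n _

lemma coeff_g (k r m n : ℕ) : (PowerSeries.coeff n) (g k r m) = ((PF k r m n).ncard : ℚ) :=
  PowerSeries.coeff_mk n _

lemma e_up {k m : ℕ} (hk : 2 ≤ k) (hm : 1 ≤ m) : e k m = e k 0 * e k (m-1) := by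
  ext n
  rw [PowerSeries.coeff_mul, coeff_e, card_PS_up hk hm]
  push_cast
  exact Finset.sum_congr rfl fun p _ => by rw [coeff_e, coeff_e]

lemma g_up {k r m : ℕ} (hk : 2 ≤ k) (hm : 1 ≤ m) : g k r m = g k r 0 * e k (m-1) := by
  ext n
  rw [PowerSeries.coeff_mul, coeff_g, card_PF_up hk hm]
  push_cast
  exact Finset.sum_congr rfl fun p _ => by rw [coeff_g, coeff_e]

lemma e_pow {k : ℕ} (hk : 2 ≤ k) : ∀ m, e k m = (e k 0) ^ (m + 1) := by
  intro m
  induction m with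
  | zero => rw [pow_one]
  | succ m ih =>
    rw [e_up hk (by omega), Nat.add_sub_cancel, ih, pow_succ]
    ring

lemma g_pow {k r : ℕ} (hk : 2 ≤ k) (m : ℕ) : g k r m = g k r 0 * (e k 0) ^ m := by
  cases m with
  | zero => rw [pow_zero, mul_one]
  | succ m =>
    rw [g_up hk (by omega), Nat.add_sub_cancel, e_pow hk m]

lemma PF_zero {k r : ℕ} (hk : 2 ≤ k) : PF k r 0 0 = {([] : List ℤ)} := by
  ext L
  constructor
  · rintro ⟨h1, h2⟩
    rw [PS_zero k hk] at h1
    exact h1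
  · rintro rfl
    refine ⟨by rw [PS_zero k hk]; rfl, ?_⟩
    rintro ⟨i, h1, -⟩
    simp at h1

lemma e_fe {k : ℕ} (hk : 2 ≤ k) : e k 0 = 1 + X * (e k 0) ^ k := by
  have h : e k 0 = 1 + X * (e k (k-2) * e k 0) := by
    ext n
    cases n with
    | zero =>
      have hx : (PowerSeries.coeff 0) (X * (e k (k-2) * e k 0)) = 0 := by
        rw [PowerSeries.coeff_zero_eq_constantCoeff, map_mul, constantCoeff_X, zero_mul]
      rw [map_add, hx, add_zero, coeff_e, card_PS_zero k hk, PowerSeries.coeff_one,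
        if_pos rfl]
      norm_num
    | succ n =>
      rw [map_add, PowerSeries.coeff_succ_X_mul, coeff_e,
        card_PS_first hk (by omega : 1 ≤ n + 1), PowerSeries.coeff_one,
        if_neg (Nat.succ_ne_zero n), PowerSeries.coeff_mul]
      rw [Nat.add_sub_cancel]
      push_cast
      rw [zero_add]
      exact Finset.sum_congr rfl fun p _ => by rw [coeff_e, coeff_e]
  conv_lhs => rw [h]
  rw [e_pow hk (k-2), ← pow_succ, show k - 2 + 1 + 1 = k from by omega]

lemma e_g_fe {k r : ℕ} (hk : 2 ≤ k) (hr1 : 1 ≤ r) (hr2 : r ≤ k - 1) :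
    e k 0 = g k r 0 + X * (g k r (k-1-r) * e k 0) := by
  ext n
  cases n with
  | zero =>
    have hx : (PowerSeries.coeff 0) (X * (g k r (k-1-r) * e k 0)) = 0 := by
      rw [PowerSeries.coeff_zero_eq_constantCoeff, map_mul, constantCoeff_X, zero_mul]
    rw [map_add, hx, add_zero, coeff_e, coeff_g, card_PS_zero k hk, PF_zero hk,
      Set.ncard_singleton]
  | succ n =>
    rw [map_add, PowerSeries.coeff_succ_X_mul, coeff_e, coeff_g, PowerSeries.coeff_mul]
    rw [card_PS_eq_PF_add_hill (r := r) hk, card_PS_hill hk hr1 hr2 (by omega : 1 ≤ n + 1),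
      Nat.add_sub_cancel]
    push_cast
    congr 1
    exact Finset.sum_congr rfl fun p _ => by rw [coeff_g, coeff_e]

lemma ck_unique {k : ℕ} {C₁ C₂ : PowerSeries ℚ}
    (h₁ : C₁ = 1 + X * C₁ ^ k) (h₂ : C₂ = 1 + X * C₂ ^ k) : C₁ = C₂ := by
  set S := ∑ i ∈ range k, C₁ ^ i * C₂ ^ (k - 1 - i) with hS
  have e1 : C₁ - C₂ = X * (C₁ ^ k - C₂ ^ k) := by
    conv_lhs => rw [h₁, h₂]
    ring
  have e2 : C₁ ^ k - C₂ ^ k = S * (C₁ - C₂) := (geom_sum₂_mul C₁ C₂ k).symm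
  have hd : (C₁ - C₂) * (1 - X * S) = 0 := by
    calc (C₁ - C₂) * (1 - X * S) = (C₁ - C₂) - X * (S * (C₁ - C₂)) := by ring
      _ = (C₁ - C₂) - X * (C₁ ^ k - C₂ ^ k) := by rw [← e2]
      _ = 0 := by rw [← e1]; ring
  have hunit : (1 - X * S : PowerSeries ℚ) ≠ 0 := by
    intro h0
    have := congrArg (constantCoeff) h0
    rw [map_sub, map_mul, constantCoeff_X, map_one] at this
    simp at this
  rcases mul_eq_zero.1 hd with h | h
  · exact sub_eq_zero.1 h
  · exact absurd h hunit

lemma DyckSet_eq_PS {k n : ℕ} (hk : 2 ≤ k) : DyckSet k 0 n 0 = PS k 0 n := by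
  ext L
  constructor
  · rintro ⟨h1, h2, h3, h4⟩
    have h2' : L.sum = ((0:ℕ):ℤ) := by simpa using h2
    have h4' : NN L := fun i => by simpa using h4 i
    refine ⟨h3, h4', h2', ?_⟩
    have hlen := length_eq hk h3
    rw [h2', h1] at hlen
    have hk0 : (k:ℤ) ≠ 0 := by
      intro h; rw [Nat.cast_eq_zero] at h; omega
    have : ((n:ℤ)) = (L.count (1 - (k:ℤ)) : ℤ) := by
      apply mul_left_cancel₀ hk0
      push_cast at hlen ⊢
      omega
    exact_mod_cast this.symm
  · intro h
    have hlen := length_of_mem_PS hk h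
    obtain ⟨hs, hnn, hsum, hcount⟩ := h
    refine ⟨by omega, by simpa using hsum, hs, fun i => by simpa using hnn i⟩

lemma F_eq_g {k r n : ℕ} (hk : 2 ≤ k) :
    F k 0 r n 0 = (PF k r 0 n).ncard := by
  have hset : {L | L ∈ DyckSet k 0 n 0 ∧ ¬ HasHill k r L} = PF k r 0 n := by
    ext L
    rw [PF, Set.mem_setOf_eq, Set.mem_setOf_eq, DyckSet_eq_PS hk]
  rw [F, hset, Nat.card_coe_set_eq]

end FineGFAux

open FineGFAux in
/-- The generating function of the `(k,r)`-Fine numbers satisfies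
`F_{k,r}(t) = C_k(t) / (1 + t·C_k(t)^(k-r))`, i.e.
`F_{k,r}(t) · (1 + t·C_k(t)^(k-r)) = C_k(t)`. -/
theorem fine_gf (k r : ℕ) (hk : 2 ≤ k) (hr1 : 1 ≤ r) (hr2 : r ≤ k - 1)
    (Ck : PowerSeries ℚ) (h1 : PowerSeries.constantCoeff Ck = 1)
    (h2 : Ck = 1 + PowerSeries.X * Ck ^ k) :
    PowerSeries.mk (fun n => (F k 0 r n 0 : ℚ)) *
      (1 + PowerSeries.X * Ck ^ (k - r)) = Ck := by
  have hF : PowerSeries.mk (fun n => (F k 0 r n 0 : ℚ)) = g k r 0 := by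
    ext n
    rw [PowerSeries.coeff_mk, coeff_g, F_eq_g hk]
  have hCk : Ck = e k 0 := ck_unique h2 (e_fe hk)
  rw [hF, hCk]
  have hg := e_g_fe hk hr1 hr2
  rw [g_pow hk (k-1-r)] at hg
  have hpow : (e k 0) ^ (k-1-r) * (e k 0) = (e k 0) ^ (k-r) := by
    rw [← pow_succ, show k - 1 - r + 1 = k - r from by omega]
  have key : g k r 0 * (1 + X * (e k 0) ^ (k - r)) =
      g k r 0 + X * (g k r 0 * (e k 0) ^ (k-1-r) * e k 0) := by
    rw [← hpow]; ring
  rw [key]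
  exact hg.symm
end

section
/- The generating function F(t) of the Fine numbers satisfies F(t) = C(t)/(1 + t·C(t)), where C(t) is the Catalan number generating function satisfying C(t) = 1 + t·C(t)^2; equivalently F(t)·(1 + t·C(t)) = C(t). -/
open Finset PowerSeries

open Finset PowerSeries List

namespace FineAux

def stepInt : DyckStep → ℤ | .U => 1 | .D => -1
def intStep (x : ℤ) : DyckStep := if x = 1 then DyckStep.U else DyckStep.D

lemma sum_map_stepInt (l : List DyckStep) :
    (l.map stepInt).sum = (l.count DyckStep.U : ℤ) - l.count DyckStep.D := by
  induction l with
  | nil => simp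
  | cons s t ih =>
    cases s <;> simp [stepInt, ih, List.count_cons] <;> ring

lemma count_U_add_count_D (l : List DyckStep) : l.count DyckStep.U + l.count DyckStep.D = l.length := by
  induction l with
  | nil => simp
  | cons s t ih => cases s <;> simp [List.count_cons, ← ih] <;> ring

lemma map_intStep_stepInt (l : List DyckStep) : (l.map stepInt).map intStep = l := by
  induction l with
  | nil => simp
  | cons s t ih => cases s <;> simp [stepInt, intStep, ih]

lemma map_stepInt_intStep (L : List ℤ) (h : ∀ s ∈ L, s = 1 ∨ s = -1) :
    (L.map intStep).map stepInt = L := by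
  induction L with
  | nil => simp
  | cons s t ih =>
    rcases h s (by simp) with rfl | rfl <;>
      simp [stepInt, intStep, ih fun x hx => h x (by simp [hx])]

/-- The hill predicate transported to Dyck words. -/
def HW (p : DyckWord) : Prop := HasHill 2 1 (p.toList.map stepInt)

def hillAt (p : DyckWord) (i : ℕ) : Prop :=
  i + 1 < p.toList.length ∧ p.toList.getD i DyckStep.D = DyckStep.U ∧ p.toList.getD (i + 1) DyckStep.U = DyckStep.D ∧
    (p.toList.take (i + 2)).count DyckStep.U = (p.toList.take (i + 2)).count DyckStep.D

lemma HW_iff {p : DyckWord} : HW p ↔ ∃ i, hillAt p i := by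
  unfold HW HasHill hillAt
  constructor
  · rintro ⟨i, h1, h2, h3, h4⟩
    simp only [List.length_map] at h1
    refine ⟨i, h1, ?_, ?_, ?_⟩
    · have := h2 0 (by norm_num)
      rw [List.getD_eq_getElem _ _ (by simpa using (by omega : i + 0 < p.toList.length)),
        List.getElem_map] at this
      rw [List.getD_eq_getElem _ _ (by omega)]
      simp only [Nat.add_zero] at this ⊢
      cases hx : p.toList[i] <;> simp [hx, stepInt] at this ⊢
    · rw [List.getD_eq_getElem _ _ (by simpa using h1), List.getElem_map] at h3
      rw [List.getD_eq_getElem _ _ h1]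
      cases hx : p.toList[i+1] <;> simp [hx, stepInt] at h3 ⊢
    · rw [← List.map_take, sum_map_stepInt] at h4
      have he : i + 1 + 1 = i + 2 := by ring
      rw [he] at h4
      omega
  · rintro ⟨i, h1, h2, h3, h4⟩
    refine ⟨i, by simpa using h1, ?_, ?_, ?_⟩
    · intro j hj
      interval_cases j
      rw [List.getD_eq_getElem _ _ (by simpa using (by omega : i + 0 < p.toList.length)),
        List.getElem_map]
      rw [List.getD_eq_getElem _ _ (by omega)] at h2
      simp only [Nat.add_zero] at *
      rw [h2]; rfl
    · rw [List.getD_eq_getElem _ _ (by simpa using h1), List.getElem_map]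
      rw [List.getD_eq_getElem _ _ h1] at h3
      rw [h3]; norm_num [stepInt]
    · rw [← List.map_take, sum_map_stepInt]
      have he : i + 1 + 1 = i + 2 := by ring
      rw [he, h4]; ring

end FineAux

namespace FineAux

def hillW : DyckWord := DyckWord.nest 0

lemma hillW_toList : hillW.toList = [DyckStep.U, DyckStep.D] := rfl

lemma semilength_hillW : hillW.semilength = 1 := by
  simp [hillW]

variable {p : DyckWord} {i : ℕ}

lemma take_two (h : hillAt p i) :
    p.toList.take (i + 2) = p.toList.take i ++ [DyckStep.U, DyckStep.D] := by
  obtain ⟨h1, h2, h3, h4⟩ := h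
  rw [List.getD_eq_getElem _ _ (by omega)] at h2
  rw [List.getD_eq_getElem _ _ h1] at h3
  rw [show i + 2 = (i + 1) + 1 from rfl, List.take_succ, List.take_succ,
    List.getElem?_eq_getElem (by omega : i < p.toList.length),
    List.getElem?_eq_getElem h1, h2, h3]
  simp

lemma take_balanced (h : hillAt p i) :
    (p.toList.take i).count DyckStep.U = (p.toList.take i).count DyckStep.D := by
  have h4 := h.2.2.2
  rw [take_two h] at h4
  simp [List.count_append] at h4
  omega

lemma decomp (h : hillAt p i) :
    p = p.take i (take_balanced h) + hillW + p.drop (i + 2) h.2.2.2 := by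
  apply DyckWord.ext
  show p.toList = (p.toList.take i ++ [DyckStep.U, DyckStep.D]) ++ p.toList.drop (i + 2)
  conv_lhs => rw [← List.take_append_drop (i + 2) p.toList]
  rw [take_two h]

lemma noHW_take (h : hillAt p i) (hmin : ∀ j < i, ¬ hillAt p j) :
    ¬ HW (p.take i (take_balanced h)) := by
  rw [HW_iff]
  rintro ⟨j, j1, j2, j3, j4⟩
  have hip : i + 1 < p.toList.length := h.1
  have hlen : ((p.take i (take_balanced h)).toList).length = i := by
    show (p.toList.take i).length = i
    simp; omega
  rw [hlen] at j1
  have htk : ∀ m, m ≤ i → ((p.take i (take_balanced h)).toList).take m = p.toList.take m := by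
    intro m hm
    show (p.toList.take i).take m = p.toList.take m
    rw [List.take_take, min_eq_left hm]
  have hge : ∀ m (_ : m < i) d, ((p.take i (take_balanced h)).toList).getD m d = p.toList.getD m d := by
    intro m hm d
    show (p.toList.take i).getD m d = p.toList.getD m d
    rw [List.getD_eq_getElem _ _ (by simp only [List.length_take]; omega),
      List.getD_eq_getElem _ _ (by omega : m < p.toList.length), List.getElem_take]
  exact hmin j (by omega) ⟨by omega, by rw [← hge j (by omega)]; exact j2,
    by rw [← hge (j+1) (by omega)]; exact j3, by rw [← htk (j+2) (by omega)]; exact j4⟩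

lemma toList_append3 (A B : DyckWord) :
    (A + hillW + B).toList = A.toList ++ ([DyckStep.U, DyckStep.D] ++ B.toList) := by
  show (A.toList ++ [DyckStep.U, DyckStep.D]) ++ B.toList = _
  rw [List.append_assoc]

lemma hillAt_append (A B : DyckWord) :
    hillAt (A + hillW + B) A.toList.length := by
  set a := A.toList.length with ha
  have hl : (A + hillW + B).toList = A.toList ++ ([DyckStep.U, DyckStep.D] ++ B.toList) := toList_append3 A B
  have hlen2 : (A.toList ++ ([DyckStep.U, DyckStep.D] ++ B.toList)).length = a + 2 + B.toList.length := by
    simp [← ha]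
    try ring
  have hlen : (A + hillW + B).toList.length = a + 2 + B.toList.length := by
    rw [hl]; exact hlen2
  refine ⟨by omega, ?_, ?_, ?_⟩
  · rw [hl, List.getD_eq_getElem _ _ (by rw [hlen2]; omega),
      List.getElem_append_right (by omega : A.toList.length ≤ a)]
    simp [← ha]
  · rw [hl, List.getD_eq_getElem _ _ (by rw [hlen2]; omega),
      List.getElem_append_right (by omega : A.toList.length ≤ a + 1)]
    simp [← ha]
  · have : (A + hillW + B).toList.take (a + 2) = A.toList ++ [DyckStep.U, DyckStep.D] := by
      show ((A.toList ++ [DyckStep.U, DyckStep.D]) ++ B.toList).take (a + 2) = _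
      exact List.take_left' (by simp [← ha])
    rw [this]
    simp [List.count_append, A.count_U_eq_count_D]

lemma hillAt_append_min (A B : DyckWord) (hA : ¬ HW A) :
    ∀ j, hillAt (A + hillW + B) j → A.toList.length ≤ j := by
  set a := A.toList.length with ha
  intro j hj
  by_contra hc
  push_neg at hc
  obtain ⟨j1, j2, j3, j4⟩ := hj
  have hl := toList_append3 A B
  have hlen2 : (A.toList ++ ([DyckStep.U, DyckStep.D] ++ B.toList)).length = a + 2 + B.toList.length := by
    simp [← ha]
    try ring
  have hlen : (A + hillW + B).toList.length = a + 2 + B.toList.length := by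
    rw [hl]; exact hlen2
  rw [hl] at j2 j3 j4
  rcases Nat.lt_or_ge (j + 1) a with hja | hja
  · -- hill inside A
    apply hA
    rw [HW_iff]
    refine ⟨j, by omega, ?_, ?_, ?_⟩
    · rw [List.getD_eq_getElem _ _ (by omega)]
      rw [List.getD_eq_getElem _ _ (by rw [hlen2]; omega),
        List.getElem_append_left (by omega)] at j2
      exact j2
    · rw [List.getD_eq_getElem _ _ (by omega)]
      rw [List.getD_eq_getElem _ _ (by rw [hlen2]; omega),
        List.getElem_append_left (by omega)] at j3
      exact j3
    · rw [List.take_append_of_le_length (by omega)] at j4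
      exact j4
  · -- j + 1 = a, but element at a is U not D
    have hje : j + 1 = a := by omega
    rw [hje, List.getD_eq_getElem _ _ (by rw [hlen2]; omega),
      List.getElem_append_right (by omega : A.toList.length ≤ a)] at j3
    simp [← ha] at j3

end FineAux

namespace FineAux

open scoped Classical

noncomputable def fh (p : DyckWord) (h : HW p) : ℕ := Nat.find (HW_iff.mp h)

lemma fh_spec (p : DyckWord) (h : HW p) : hillAt p (fh p h) := Nat.find_spec (HW_iff.mp h)

lemma fh_min (p : DyckWord) (h : HW p) : ∀ j < fh p h, ¬ hillAt p j :=
  fun _ hj => Nat.find_min _ hj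

noncomputable def FAw (p : DyckWord) : DyckWord :=
  if h : HW p then p.take (fh p h) (take_balanced (fh_spec p h)) else 0

noncomputable def FBw (p : DyckWord) : DyckWord :=
  if h : HW p then p.drop (fh p h + 2) (fh_spec p h).2.2.2 else 0

lemma FAw_noHW (p : DyckWord) (h : HW p) : ¬ HW (FAw p) := by
  rw [FAw, dif_pos h]; exact noHW_take (fh_spec p h) (fh_min p h)

lemma decomp_FAw (p : DyckWord) (h : HW p) : p = FAw p + hillW + FBw p := by
  rw [FAw, FBw, dif_pos h, dif_pos h]; exact decomp (fh_spec p h)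

lemma semilength_decomp (p : DyckWord) (h : HW p) :
    p.semilength = (FAw p).semilength + 1 + (FBw p).semilength := by
  conv_lhs => rw [decomp_FAw p h]
  simp [semilength_hillW]

lemma fh_append (A B : DyckWord) (hA : ¬ HW A) (h : HW (A + hillW + B)) :
    fh (A + hillW + B) h = A.toList.length := by
  apply Nat.le_antisymm
  · exact Nat.find_le (hillAt_append A B)
  · exact hillAt_append_min A B hA _ (fh_spec _ h)

lemma FAw_append (A B : DyckWord) (hA : ¬ HW A) :
    FAw (A + hillW + B) = A ∧ FBw (A + hillW + B) = B := by
  have h : HW (A + hillW + B) := HW_iff.mpr ⟨_, hillAt_append A B⟩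
  constructor
  · rw [FAw, dif_pos h]
    apply DyckWord.ext
    show (A + hillW + B).toList.take (fh _ h) = A.toList
    rw [fh_append A B hA h, toList_append3, List.take_append_of_le_length (le_refl _),
      List.take_length]
  · rw [FBw, dif_pos h]
    apply DyckWord.ext
    show (A + hillW + B).toList.drop (fh _ h + 2) = B.toList
    rw [fh_append A B hA h]
    show ((A.toList ++ [DyckStep.U, DyckStep.D]) ++ B.toList).drop (A.toList.length + 2) = B.toList
    exact List.drop_left' (by simp)

noncomputable def fiberEquiv (n i : ℕ) (hi : i ≤ n) :
    {p : DyckWord // p.semilength = n + 1 ∧ HW p ∧ (FAw p).semilength = i} ≃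
      ({A : DyckWord // A.semilength = i ∧ ¬ HW A} ×
        {B : DyckWord // B.semilength = n - i}) where
  toFun q :=
    (⟨FAw q.1, q.2.2.2, FAw_noHW q.1 q.2.2.1⟩,
     ⟨FBw q.1, by
        obtain ⟨p, h1, h2, h3⟩ := q
        have := semilength_decomp p h2
        show (FBw p).semilength = n - i
        omega⟩)
  invFun ab :=
    ⟨ab.1.1 + hillW + ab.2.1, by
      obtain ⟨⟨A, hA1, hA2⟩, ⟨B, hB⟩⟩ := ab
      have hFA := FAw_append A B hA2
      refine ⟨?_, HW_iff.mpr ⟨_, hillAt_append A B⟩, ?_⟩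
      · simp only [DyckWord.semilength_add, semilength_hillW]
        omega
      · rw [hFA.1, hA1]⟩
  left_inv q := by
    obtain ⟨p, h1, h2, h3⟩ := q
    exact Subtype.ext (decomp_FAw p h2).symm
  right_inv ab := by
    obtain ⟨⟨A, hA1, hA2⟩, ⟨B, hB⟩⟩ := ab
    have hFA := FAw_append A B hA2
    simp only [Prod.mk.injEq, Subtype.mk.injEq]
    exact ⟨hFA.1, hFA.2⟩

lemma card_semilength (m : ℕ) :
    Nat.card {p : DyckWord // p.semilength = m} = catalan m := by
  rw [Nat.card_eq_fintype_card, DyckWord.card_dyckWord_semilength_eq_catalan]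

/-- The number of hill-free Dyck words of semilength `m`. -/
noncomputable def fW (m : ℕ) : ℕ := Nat.card {A : DyckWord // A.semilength = m ∧ ¬ HW A}

lemma fW_zero : fW 0 = 1 := by
  rw [fW, Nat.card_eq_one_iff_unique]
  have hz : ∀ A : DyckWord, A.semilength = 0 → A = 0 := by
    intro A hA
    have := A.two_mul_semilength_eq_length
    rw [hA] at this
    rw [← DyckWord.toList_eq_nil, ← List.length_eq_zero_iff]
    omega
  constructor
  · constructor
    rintro ⟨A, hA, -⟩ ⟨B, hB, -⟩
    refine Subtype.ext ?_
    show A = B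
    rw [hz A hA, hz B hB]
  · refine ⟨0, rfl, ?_⟩
    rw [HW_iff]
    rintro ⟨i, hi, -⟩
    have h0 : (0 : DyckWord).toList.length = 0 := rfl
    omega

lemma key_s13 (n : ℕ) :
    catalan (n + 1) = fW (n + 1) + ∑ i ∈ range (n + 1), fW i * catalan (n - i) := by
  set α := {p : DyckWord // p.semilength = n + 1} with hα
  have hcard : Fintype.card α = catalan (n + 1) :=
    DyckWord.card_dyckWord_semilength_eq_catalan (n + 1)
  have h1 : (univ.filter (fun x : α => ¬ HW x.1)).card = fW (n + 1) := by
    rw [← Fintype.card_subtype, ← Nat.card_eq_fintype_card]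
    exact Nat.card_congr
      (Equiv.subtypeSubtypeEquivSubtypeInter
        (fun p : DyckWord => p.semilength = n + 1) (fun p => ¬ HW p))
  have h2 : (univ.filter (fun x : α => HW x.1)).card
      = ∑ i ∈ range (n + 1), fW i * catalan (n - i) := by
    rw [Finset.card_eq_sum_card_fiberwise
      (f := fun x : α => (FAw x.1).semilength) (t := range (n + 1)) (by
        rintro ⟨p, hp⟩ hx
        have hx2 : HW p := (Finset.mem_filter.mp hx).2
        have := semilength_decomp p hx2
        rw [Finset.mem_coe, Finset.mem_range]
        show (FAw p).semilength < n + 1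
        omega)]
    apply Finset.sum_congr rfl
    intro i hi
    rw [Finset.mem_range] at hi
    rw [Finset.filter_filter, ← Fintype.card_subtype, ← Nat.card_eq_fintype_card]
    have e1 := Equiv.subtypeSubtypeEquivSubtypeInter
      (fun p : DyckWord => p.semilength = n + 1)
      (fun p => HW p ∧ (FAw p).semilength = i)
    rw [Nat.card_congr (e1.trans (fiberEquiv n i (by omega))), Nat.card_prod,
      card_semilength]
    rfl
  have hsplit := Finset.card_filter_add_card_filter_not
    (s := (univ : Finset α)) (p := fun x : α => HW x.1)
  rw [Finset.card_univ, hcard] at hsplit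
  omega

end FineAux

namespace FineAux

lemma counts_of_intStep (L : List ℤ) (hstep : ∀ s ∈ L, s = 1 ∨ s = -1) :
    ((L.map intStep).count DyckStep.U : ℤ) - (L.map intStep).count DyckStep.D = L.sum ∧
    (L.map intStep).count DyckStep.U + (L.map intStep).count DyckStep.D = L.length := by
  have hm := map_stepInt_intStep L hstep
  constructor
  · have h := sum_map_stepInt (L.map intStep)
    rw [hm] at h
    omega
  · have h := count_U_add_count_D (L.map intStep)
    simpa using h

lemma steps_norm {L : List ℤ} {n : ℕ} (h : L ∈ DyckSet 2 0 n 0) :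
    ∀ s ∈ L, s = 1 ∨ s = -1 := by
  intro s hs
  rcases h.2.2.1 s hs with h' | h'
  · exact Or.inl h'
  · right; rw [h']; norm_num

def toDW {n : ℕ} (L : List ℤ) (h : L ∈ DyckSet 2 0 n 0) : DyckWord where
  toList := L.map intStep
  count_U_eq_count_D := by
    have hc := counts_of_intStep L (steps_norm h)
    have hsum : L.sum = 0 := by have := h.2.1; simpa using this
    rw [hsum] at hc
    omega
  count_D_le_count_U := by
    intro i
    rw [← List.map_take]
    have hc := counts_of_intStep (L.take i)
      (fun s hs => steps_norm h s (List.take_subset i L hs))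
    have hpre : (0 : ℤ) ≤ (L.take i).sum := by
      have := h.2.2.2 i; simpa using this
    omega

lemma toDW_semilength {n : ℕ} (L : List ℤ) (h : L ∈ DyckSet 2 0 n 0) :
    (toDW L h).semilength = n := by
  have h2 := (toDW L h).two_mul_semilength_eq_length
  have hlen : (toDW L h).toList.length = 2 * n := by
    show (L.map intStep).length = 2 * n
    rw [List.length_map]
    exact h.1
  omega

lemma toDW_HW {n : ℕ} (L : List ℤ) (h : L ∈ DyckSet 2 0 n 0) :
    HW (toDW L h) ↔ HasHill 2 1 L := by
  unfold HW
  rw [show (toDW L h).toList = L.map intStep from rfl,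
    map_stepInt_intStep L (steps_norm h)]

lemma wd_mem {n : ℕ} (A : DyckWord) (hA : A.semilength = n) :
    A.toList.map stepInt ∈ DyckSet 2 0 n 0 := by
  have hc := sum_map_stepInt A.toList
  have hl := count_U_add_count_D A.toList
  have hb := A.count_U_eq_count_D
  have h2 := A.two_mul_semilength_eq_length
  refine ⟨?_, ?_, ?_, ?_⟩
  · rw [List.length_map]; omega
  · rw [hc, hb]; push_cast; ring
  · intro s hs
    rw [List.mem_map] at hs
    obtain ⟨x, -, rfl⟩ := hs
    cases x
    · left; rfl
    · right; show (-1 : ℤ) = 1 - (2 : ℕ); norm_num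
  · intro i
    rw [← List.map_take, sum_map_stepInt]
    have := A.count_D_le_count_U i
    push_cast
    omega

noncomputable def listEquiv (n : ℕ) :
    {L : List ℤ // L ∈ DyckSet 2 0 n 0 ∧ ¬ HasHill 2 1 L} ≃
      {A : DyckWord // A.semilength = n ∧ ¬ HW A} where
  toFun := fun ⟨L, hL⟩ =>
    ⟨toDW L hL.1, toDW_semilength L hL.1, by rw [toDW_HW L hL.1]; exact hL.2⟩
  invFun := fun ⟨A, hA⟩ =>
    ⟨A.toList.map stepInt, wd_mem A hA.1, by
      have : HasHill 2 1 (A.toList.map stepInt) ↔ HW A := Iff.rfl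
      rw [this]; exact hA.2⟩
  left_inv := fun ⟨L, hL⟩ => Subtype.ext (by
    show (L.map intStep).map stepInt = L
    exact map_stepInt_intStep L (steps_norm hL.1))
  right_inv := fun ⟨A, hA⟩ => Subtype.ext (by
    apply DyckWord.ext
    show (A.toList.map stepInt).map intStep = A.toList
    exact map_intStep_stepInt A.toList)

lemma F_eq_fW (n : ℕ) : F 2 0 1 n 0 = fW n := by
  rw [F, fW]
  exact Nat.card_congr (listEquiv n)

end FineAux

/-- The Fine number generating function `F(t)` satisfies `F(t)·(1 + t·C(t)) = C(t)`,
where `C(t)` is the Catalan generating function, which satisfies `C = 1 + t·C²`.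
Fine numbers count Dyck paths with no hill, i.e. `F 2 0 1 n 0` in our encoding. -/
theorem fine_numbers_gf :
    (PowerSeries.mk (fun n => (catalan n : ℚ))) =
      1 + PowerSeries.X * (PowerSeries.mk (fun n => (catalan n : ℚ))) ^ 2 ∧
    PowerSeries.mk (fun n => (F 2 0 1 n 0 : ℚ)) *
        (1 + PowerSeries.X * PowerSeries.mk (fun n => (catalan n : ℚ))) =
      PowerSeries.mk (fun n => (catalan n : ℚ)) := by
  constructor
  · ext n
    cases n with
    | zero =>
      simp [PowerSeries.coeff_zero_eq_constantCoeff, map_add, map_mul,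
        PowerSeries.constantCoeff_X]
    | succ n =>
      rw [map_add, PowerSeries.coeff_one, if_neg (Nat.succ_ne_zero n),
        PowerSeries.coeff_succ_X_mul, pow_two, PowerSeries.coeff_mul,
        PowerSeries.coeff_mk]
      simp only [PowerSeries.coeff_mk]
      rw [catalan_succ' n]
      push_cast
      ring
  · have hF : PowerSeries.mk (fun n => (F 2 0 1 n 0 : ℚ))
        = PowerSeries.mk (fun n => (FineAux.fW n : ℚ)) := by
      ext m
      rw [PowerSeries.coeff_mk, PowerSeries.coeff_mk, FineAux.F_eq_fW]
    rw [hF, mul_add, mul_one, show PowerSeries.mk (fun n => (FineAux.fW n : ℚ)) *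
        (PowerSeries.X * PowerSeries.mk (fun n => (catalan n : ℚ)))
      = PowerSeries.X * (PowerSeries.mk (fun n => (FineAux.fW n : ℚ)) *
        PowerSeries.mk (fun n => (catalan n : ℚ))) from by ring]
    ext n
    cases n with
    | zero =>
      rw [map_add, PowerSeries.coeff_zero_eq_constantCoeff, map_mul]
      simp [FineAux.fW_zero]
    | succ n =>
      rw [map_add, PowerSeries.coeff_succ_X_mul, PowerSeries.coeff_mul,
        PowerSeries.coeff_mk, PowerSeries.coeff_mk]
      simp only [PowerSeries.coeff_mk]
      rw [Finset.Nat.sum_antidiagonal_eq_sum_range_succ_mk, eq_comm]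
      exact_mod_cast FineAux.key_s13 n
end

section
/- Fix k ≥ 2. For every n ≥ 0, the number of k-ary trees with exactly n edges equals M^{k-1}_{n,0}(1⃗,1⃗), the number of order-(k-1) Motzkin paths of length n from (0,0) to (n,0) using steps U=(1,1) and D_i=(1,-i) for 0 ≤ i ≤ k-1 that stay weakly above y=0. -/
open Finset PowerSeries

/-- Rooted plane trees: a vertex together with an ordered (possibly empty) list of
subtrees. -/
inductive PTree : Type
  | node : List PTree → PTree

namespace PTree

/-- The number of edges of a plane tree. -/
def edges : PTree → ℕ
  | node ts => (ts.attach.map fun t => edges t.1).sum + ts.length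
  decreasing_by
    have := List.sizeOf_lt_of_mem t.2
    simp only [PTree.node.sizeOf_spec]
    omega

/-- Every vertex of the tree has at most `k` children. -/
def arityLE (k : ℕ) : PTree → Prop
  | node ts => ts.length ≤ k ∧ ∀ t ∈ ts.attach, arityLE k t.1
  decreasing_by
    have := List.sizeOf_lt_of_mem t.2
    simp only [PTree.node.sizeOf_spec]
    omega

/-- Every vertex of the tree has either exactly `k` children or a number of children
lying in `S`. -/
def arityIn (k : ℕ) (S : Finset ℕ) : PTree → Prop
  | node ts => (ts.length = k ∨ ts.length ∈ S) ∧ ∀ t ∈ ts.attach, arityIn k S t.1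
  decreasing_by
    have := List.sizeOf_lt_of_mem t.2
    simp only [PTree.node.sizeOf_spec]
    omega

end PTree

namespace KaryAux

/-- prefix sums nonnegative -/
def NN (L : List ℤ) : Prop := ∀ m, 0 ≤ (L.take m).sum

def StepOK (k : ℕ) (s : ℤ) : Prop := s = 1 ∨ ∃ d : ℕ, d ≤ k - 1 ∧ s = -(d : ℤ)

def Good (k : ℕ) (L : List ℤ) : Prop := NN L ∧ L.sum = 0 ∧ ∀ s ∈ L, StepOK k s

lemma sum_nonneg_of_NN {L : List ℤ} (h : NN L) : 0 ≤ L.sum := by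
  have := h L.length; rwa [List.take_length] at this

lemma take_sum_append (A B : List ℤ) (m : ℕ) :
    ((A ++ B).take m).sum = (A.take m).sum + (B.take (m - A.length)).sum := by
  rw [List.take_append, List.sum_append]

lemma NN_append {A B : List ℤ} (hA : NN A) (hB : ∀ m, 0 ≤ A.sum + (B.take m).sum) :
    NN (A ++ B) := by
  intro m
  rw [take_sum_append]
  rcases le_or_gt m A.length with h | h
  · have : m - A.length = 0 := by omega
    simpa [this] using hA m
  · rw [List.take_of_length_le (le_of_lt h)]
    exact hB _

lemma NN_of_append_left {A B : List ℤ} (h : NN (A ++ B)) : NN A := by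
  intro m
  rcases le_or_gt m A.length with hm | hm
  · have := h m
    rwa [List.take_append, Nat.sub_eq_zero_of_le hm, List.take_zero,
      List.append_nil] at this
  · rw [List.take_of_length_le (le_of_lt hm)]
    have := h A.length
    rwa [List.take_append, Nat.sub_self, List.take_zero, List.append_nil,
      List.take_length] at this

lemma NN_single {x : ℤ} (hx : 0 ≤ x) : NN [x] := by
  intro m
  cases m with
  | zero => simp
  | succ m => simp [List.take_succ_cons]; omega

lemma NN_cons_one {Q : List ℤ} (hQ : NN Q) : NN ((1 : ℤ) :: Q) := by
  intro m
  cases m with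
  | zero => simp
  | succ m => simp only [List.take_succ_cons, List.sum_cons]
              have := hQ m; omega

lemma NN_flatten {Qs : List (List ℤ)} (h : ∀ Q ∈ Qs, NN Q ∧ Q.sum = 0) :
    NN ((Qs.map fun Q => (1 : ℤ) :: Q).flatten) ∧
      ((Qs.map fun Q => (1 : ℤ) :: Q).flatten).sum = (Qs.length : ℤ) := by
  induction Qs with
  | nil => constructor
           · intro m; simp
           · simp
  | cons Q rest ih =>
    obtain ⟨hNN, hsum⟩ := h Q (by simp)
    have ih' := ih (fun R hR => h R (by simp [hR]))
    simp only [List.map_cons, List.flatten_cons]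
    constructor
    · refine NN_append (NN_cons_one hNN) ?_
      intro m
      have := ih'.1 m
      simp only [List.sum_cons, hsum]
      omega
    · simp [hsum, ih'.2]
      ring

end KaryAux

namespace KaryAux

lemma flatten_sum {Qs : List (List ℤ)} (h : ∀ Q ∈ Qs, Q.sum = 0) :
    ((Qs.map fun Q => (1 : ℤ) :: Q).flatten).sum = (Qs.length : ℤ) := by
  induction Qs with
  | nil => simp
  | cons Q rest ih =>
    simp only [List.map_cons, List.flatten_cons, List.sum_append, List.sum_cons,
      h Q (by simp), ih (fun R hR => h R (by simp [hR])), List.length_cons]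
    push_cast; ring

lemma NN_append_single {A : List ℤ} {x : ℤ} (hA : NN A) (hx : 0 ≤ A.sum + x) :
    NN (A ++ [x]) := by
  refine NN_append hA fun m => ?_
  cases m with
  | zero => simpa using sum_nonneg_of_NN hA
  | succ m =>
    rw [List.take_of_length_le (by simp)]
    simpa using hx

lemma flatten_NN {Qs : List (List ℤ)} (h : ∀ Q ∈ Qs, NN Q ∧ Q.sum = 0) :
    NN ((Qs.map fun Q => (1 : ℤ) :: Q).flatten) := by
  induction Qs with
  | nil => intro m; simp
  | cons Q rest ih =>
    obtain ⟨hNN, hsum⟩ := h Q (by simp)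
    simp only [List.map_cons, List.flatten_cons]
    refine NN_append (NN_cons_one hNN) fun m => ?_
    have h1 := ih (fun R hR => h R (by simp [hR])) m
    simp only [List.sum_cons, hsum]
    omega

end KaryAux

namespace KaryAux
open PTree

def code : PTree → List ℤ
  | .node [] => []
  | .node (t :: ts) =>
      code t ++ (ts.attach.map fun s => 1 :: code s.1).flatten ++ [-(ts.length : ℤ)]
  decreasing_by
    · simp only [PTree.node.sizeOf_spec, List.cons.sizeOf_spec]; omega
    · have := List.sizeOf_lt_of_mem s.2
      simp only [PTree.node.sizeOf_spec, List.cons.sizeOf_spec]; omega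

lemma code_nil : code (.node []) = [] := by simp [code]

lemma code_cons (t : PTree) (ts : List PTree) :
    code (.node (t :: ts)) =
      code t ++ ((ts.map code).map fun Q => (1 : ℤ) :: Q).flatten ++ [-(ts.length : ℤ)] := by
  rw [code]
  congr 2
  rw [List.attach_map_val (l := ts) (f := fun s => (1 : ℤ) :: code s), List.map_map]
  rfl

lemma edges_node (l : List PTree) :
    (PTree.node l).edges = (l.map PTree.edges).sum + l.length := by
  rw [PTree.edges, List.attach_map_val]

lemma arity_node {k : ℕ} {l : List PTree} :
    (PTree.node l).arityLE k ↔ l.length ≤ k ∧ ∀ t ∈ l, t.arityLE k := by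
  rw [PTree.arityLE]
  refine and_congr_right fun _ => ⟨fun h t ht => h ⟨t, ht⟩ (List.mem_attach _ _),
    fun h t ht => h t.1 t.2⟩

lemma sum_map_add_length (ts : List PTree) :
    (ts.map fun s => s.edges + 1).sum = (ts.map PTree.edges).sum + ts.length := by
  induction ts with
  | nil => simp
  | cons a l ihl => simp only [List.map_cons, List.sum_cons, List.length_cons, ihl]; omega

lemma code_length (t : PTree) : (code t).length = t.edges := by
  induction t using code.induct with
  | case1 => simp [code_nil, edges_node]
  | case2 t ts ih ihs =>
    have ihs' : ∀ s ∈ ts, (code s).length = s.edges := fun s hs => ihs ⟨s, hs⟩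
    rw [code_cons, edges_node]
    have hfl : (((ts.map code).map fun Q => (1 : ℤ) :: Q).flatten).length
        = (ts.map fun s => s.edges + 1).sum := by
      rw [List.length_flatten, List.map_map, List.map_map]
      congr 1
      refine List.map_congr_left fun s hs => ?_
      simp [Function.comp, ihs' s hs]
    rw [List.length_append, List.length_append, hfl]
    simp only [List.map_cons, List.sum_cons, List.length_cons, List.length_nil, ih]
    have := sum_map_add_length ts
    omega

lemma code_sum (t : PTree) : (code t).sum = 0 := by
  induction t using code.induct with
  | case1 => simp [code_nil]
  | case2 t ts ih ihs =>
    have ihs' : ∀ Q ∈ ts.map code, Q.sum = 0 := by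
      intro Q hQ
      obtain ⟨s, hs, rfl⟩ := List.mem_map.1 hQ
      exact ihs ⟨s, hs⟩
    rw [code_cons]
    simp only [List.sum_append, ih, flatten_sum ihs', List.sum_cons, List.sum_nil,
      List.length_map]
    ring

lemma code_NN (t : PTree) : NN (code t) := by
  induction t using code.induct with
  | case1 => rw [code_nil]; intro m; simp
  | case2 t ts ih ihs =>
    have ihs' : ∀ Q ∈ ts.map code, NN Q ∧ Q.sum = 0 := by
      intro Q hQ
      obtain ⟨s, hs, rfl⟩ := List.mem_map.1 hQ
      exact ⟨ihs ⟨s, hs⟩, code_sum _⟩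
    rw [code_cons]
    have hAB : NN (code t ++ ((ts.map code).map fun Q => (1 : ℤ) :: Q).flatten) := by
      refine NN_append ih fun m => ?_
      have := flatten_NN ihs' m
      rw [code_sum]
      omega
    refine NN_append_single hAB ?_
    rw [List.sum_append, code_sum, flatten_sum (fun Q hQ => (ihs' Q hQ).2)]
    simp

lemma code_steps {k : ℕ} (hk : 1 ≤ k) (t : PTree) (ht : t.arityLE k) :
    ∀ s ∈ code t, StepOK k s := by
  induction t using code.induct with
  | case1 => rw [code_nil]; intro s hs; cases hs
  | case2 t ts ih ihs =>
    rw [arity_node] at ht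
    obtain ⟨hlen, hmem⟩ := ht
    rw [code_cons]
    intro s hs
    simp only [List.mem_append, List.mem_flatten, List.mem_map, List.mem_singleton] at hs
    rcases hs with (hs | ⟨l, ⟨⟨Q, ⟨u, hu, rfl⟩, rfl⟩, hl⟩⟩) | rfl
    · exact ih (hmem t (by simp)) s hs
    · rcases List.mem_cons.1 hl with rfl | hl
      · exact Or.inl rfl
      · exact ihs ⟨u, hu⟩ (hmem u (by simp [hu])) s hl
    · refine Or.inr ⟨ts.length, ?_, rfl⟩
      simp only [List.length_cons] at hlen
      omega

end KaryAux

namespace KaryAux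

lemma decomp : ∀ (d : ℕ) (L : List ℤ), NN L → (∀ s ∈ L, s = 1 ∨ s ≤ 0) → L.sum = d →
    ∃ (Q : List ℤ) (Qs : List (List ℤ)), NN Q ∧ Q.sum = 0 ∧ Qs.length = d ∧
      (∀ R ∈ Qs, NN R ∧ R.sum = 0) ∧ L = Q ++ (Qs.map fun R => (1 : ℤ) :: R).flatten := by
  intro d
  induction d with
  | zero => exact fun L hNN _ hsum => ⟨L, [], hNN, by simpa using hsum, rfl, by simp, by simp⟩
  | succ d ih =>
    intro L hNN hstep hsum
    set P : ℕ → Prop := fun j => (L.take j).sum = 0 with hP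
    have hP0 : P 0 := by simp [hP]
    set j := Nat.findGreatest P L.length with hj
    have hPj : P j := Nat.findGreatest_spec (Nat.zero_le _) hP0
    have hjle : j ≤ L.length := Nat.findGreatest_le _
    have hjne : j ≠ L.length := by
      intro h
      rw [hP, h, List.take_length, hsum] at hPj
      exact absurd hPj (by positivity)
    have hjlt : j < L.length := lt_of_le_of_ne hjle hjne
    have hafter : ∀ i, j < i → i ≤ L.length → 1 ≤ (L.take i).sum := by
      intro i h1 h2
      have hne : ¬ P i := Nat.findGreatest_is_greatest h1 h2
      have := hNN i
      simp only [hP] at hne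
      omega
    -- the step at position j is an up step
    have hx1 : L[j] = 1 := by
      have hsucc : (L.take (j + 1)).sum = (L.take j).sum + L[j] := List.sum_take_succ L j hjlt
      have h1 : 1 ≤ (L.take (j + 1)).sum := hafter (j + 1) (Nat.lt_succ_self _) hjlt
      have hmem : L[j] ∈ L := List.getElem_mem hjlt
      rcases hstep _ hmem with h | h
      · exact h
      · rw [hPj] at hsucc; omega
    set R := L.drop (j + 1) with hR
    have hLsplit : L = L.take j ++ (1 : ℤ) :: R := by
      conv_lhs => rw [← List.take_append_drop j L]
      rw [List.drop_eq_getElem_cons hjlt, hx1]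
    have htake : ∀ m, (R.take m).sum = (L.take (j + 1 + m)).sum - (L.take (j + 1)).sum := by
      intro m
      have : L.take (j + 1 + m) = L.take (j + 1) ++ R.take m := List.take_add (l := L) (i := j+1) (j := m)
      rw [this, List.sum_append]
      ring
    have hRsum1 : (L.take (j + 1)).sum = 1 := by
      have hsucc : (L.take (j + 1)).sum = (L.take j).sum + L[j] := List.sum_take_succ L j hjlt
      rw [hPj, hx1] at hsucc
      omega
    have hRNN : NN R := by
      intro m
      rw [htake m, hRsum1]
      rcases le_or_gt (j + 1 + m) L.length with h | h
      · have := hafter (j + 1 + m) (by omega) h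
        omega
      · rw [List.take_of_length_le (le_of_lt h), hsum]
        omega
    have hRsum : R.sum = d := by
      have := congrArg List.sum hLsplit
      rw [List.sum_append, List.sum_cons, hPj] at this
      rw [hsum] at this
      push_cast at this
      omega
    have hRstep : ∀ s ∈ R, s = 1 ∨ s ≤ 0 := fun s hs => hstep s (List.drop_subset _ _ hs)
    obtain ⟨Q', Qs', hQ'NN, hQ'sum, hQs'len, hQs'blocks, hReq⟩ := ih R hRNN hRstep hRsum
    refine ⟨L.take j, Q' :: Qs', ?_, hPj, by simp [hQs'len], ?_, ?_⟩
    · intro m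
      rw [List.take_take]
      exact hNN _
    · intro S hS
      rcases List.mem_cons.1 hS with rfl | hS
      · exact ⟨hQ'NN, hQ'sum⟩
      · exact hQs'blocks S hS
    · rw [List.map_cons, List.flatten_cons]
      conv_lhs => rw [hLsplit]
      rw [hReq]
      simp

lemma first_block_ne {Q Q' R R' : List ℤ} (hQ : Q.sum = 0) (hQ' : Q'.sum = 0) (hR : NN R)
    (hlt : Q.length < Q'.length) (h : Q ++ (1 : ℤ) :: R = Q' ++ (1 : ℤ) :: R') : False := by
  set c := Q'.length - Q.length - 1 with hc
  have htake := congrArg (List.take Q'.length) h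
  rw [List.take_append, List.take_append,
    List.take_of_length_le (le_of_lt hlt), Nat.sub_self, List.take_zero, List.append_nil,
    List.take_of_length_le (le_refl _)] at htake
  have hd : Q'.length - Q.length = c + 1 := by omega
  rw [hd] at htake
  rw [List.take_succ_cons] at htake
  have := congrArg List.sum htake
  rw [List.sum_append, List.sum_cons, hQ'] at this
  rw [hQ] at this
  have h2 := hR c
  omega

lemma first_block_eq {Q Q' R R' : List ℤ} (hQ : Q.sum = 0) (hQ' : Q'.sum = 0)
    (hR : NN R) (hR' : NN R') (h : Q ++ (1 : ℤ) :: R = Q' ++ (1 : ℤ) :: R') :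
    Q = Q' ∧ R = R' := by
  rcases lt_trichotomy Q.length Q'.length with hlt | heq | hgt
  · exact absurd (first_block_ne hQ hQ' hR hlt h) (fun x => x)
  · obtain ⟨h1, h2⟩ := List.append_inj h heq
    exact ⟨h1, List.cons_injective h2⟩
  · exact absurd (first_block_ne hQ' hQ hR' hgt h.symm) (fun x => x)

lemma blocks_unique : ∀ (Qs Qs' : List (List ℤ)) (Q Q' : List ℤ),
    Qs.length = Qs'.length → Q.sum = 0 → Q'.sum = 0 →
    (∀ R ∈ Qs, NN R ∧ R.sum = 0) → (∀ R ∈ Qs', NN R ∧ R.sum = 0) →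
    Q ++ (Qs.map fun R => (1 : ℤ) :: R).flatten = Q' ++ (Qs'.map fun R => (1 : ℤ) :: R).flatten →
    Q = Q' ∧ Qs = Qs' := by
  intro Qs
  induction Qs with
  | nil =>
    intro Qs' Q Q' hlen _ _ _ _ h
    rw [List.length_nil] at hlen
    obtain rfl : Qs' = [] := by
      cases Qs' with
      | nil => rfl
      | cons _ _ => simp at hlen
    simpa using h
  | cons q qs ihq =>
    intro Qs' Q Q' hlen hQ hQ' hbl hbl' h
    cases Qs' with
    | nil => simp at hlen
    | cons q' qs' =>
      simp only [List.map_cons, List.flatten_cons] at h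
      have h' : Q ++ (1 : ℤ) :: (q ++ (qs.map fun R => (1:ℤ) :: R).flatten)
          = Q' ++ (1 : ℤ) :: (q' ++ (qs'.map fun R => (1:ℤ) :: R).flatten) := by
        simpa using h
      have hNN1 : NN (q ++ (qs.map fun R => (1:ℤ) :: R).flatten) := by
        refine NN_append (hbl q (by simp)).1 fun m => ?_
        have := flatten_NN (fun S hS => hbl S (List.mem_cons_of_mem _ hS)) m
        rw [(hbl q (by simp)).2]
        omega
      have hNN2 : NN (q' ++ (qs'.map fun R => (1:ℤ) :: R).flatten) := by
        refine NN_append (hbl' q' (by simp)).1 fun m => ?_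
        have := flatten_NN (fun S hS => hbl' S (List.mem_cons_of_mem _ hS)) m
        rw [(hbl' q' (by simp)).2]
        omega
      obtain ⟨hQQ, htail⟩ := first_block_eq hQ hQ' hNN1 hNN2 h'
      have hlen' : qs.length = qs'.length := by simpa using hlen
      obtain ⟨hqq, hqsqs⟩ := ihq qs' q q' hlen' (hbl q (by simp)).2 (hbl' q' (by simp)).2
        (fun S hS => hbl S (List.mem_cons_of_mem _ hS))
        (fun S hS => hbl' S (List.mem_cons_of_mem _ hS)) htail
      exact ⟨hQQ, by rw [hqq, hqsqs]⟩

end KaryAux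

namespace KaryAux
open PTree

lemma map_inj_of {α β : Type*} {f : α → β} :
    ∀ (l l' : List α), (∀ a ∈ l, ∀ b, f a = f b → a = b) → l.map f = l'.map f → l = l'
  | [], [], _, _ => rfl
  | [], _ :: _, _, h => by simp at h
  | _ :: _, [], _, h => by simp at h
  | a :: l, b :: l', hinj, h => by
    simp only [List.map_cons, List.cons.injEq] at h
    have h1 := hinj a (by simp) b h.1
    have h2 := map_inj_of l l' (fun x hx => hinj x (by simp [hx])) h.2
    rw [h1, h2]

lemma code_blocks (ts : List PTree) : ∀ Q ∈ ts.map code, NN Q ∧ Q.sum = 0 := by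
  intro Q hQ
  obtain ⟨s, _, rfl⟩ := List.mem_map.1 hQ
  exact ⟨code_NN s, code_sum s⟩

lemma code_inj : ∀ t₁ t₂ : PTree, code t₁ = code t₂ → t₁ = t₂ := by
  intro t₁
  induction t₁ using code.induct with
  | case1 =>
    intro t₂ h
    cases t₂ with
    | node l =>
      cases l with
      | nil => rfl
      | cons u us => rw [code_nil, code_cons] at h; simp at h
  | case2 t ts ih ihs =>
    intro t₂ h
    cases t₂ with
    | node l =>
      cases l with
      | nil => rw [code_nil, code_cons] at h; simp at h
      | cons u us =>
        rw [code_cons, code_cons] at h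
        obtain ⟨h1, h2⟩ := List.append_inj' h (by simp)
        have hlen : ts.length = us.length := by
          simpa using h2
        obtain ⟨hQ, hQs⟩ := blocks_unique (ts.map code) (us.map code) (code t) (code u)
          (by simp [hlen]) (code_sum t) (code_sum u) (code_blocks ts) (code_blocks us) h1
        have htu : t = u := ih _ hQ
        have : ts = us := map_inj_of ts us (fun s hs => ihs ⟨s, hs⟩) hQs
        rw [htu, this]

lemma exists_trees {k : ℕ} : ∀ (Qs : List (List ℤ)),
    (∀ R ∈ Qs, ∃ t : PTree, t.arityLE k ∧ code t = R) →
    ∃ us : List PTree, us.length = Qs.length ∧ (∀ u ∈ us, u.arityLE k) ∧ us.map code = Qs := by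
  intro Qs
  induction Qs with
  | nil => exact fun _ => ⟨[], rfl, by simp, rfl⟩
  | cons Q rest ih =>
    intro h
    obtain ⟨t, ht, hct⟩ := h Q (by simp)
    obtain ⟨us, h1, h2, h3⟩ := ih (fun R hR => h R (List.mem_cons_of_mem _ hR))
    refine ⟨t :: us, by simp [h1], ?_, by simp [hct, h3]⟩
    intro u hu
    rcases List.mem_cons.1 hu with rfl | hu
    · exact ht
    · exact h2 u hu

lemma code_surj {k : ℕ} (hk : 1 ≤ k) :
    ∀ (N : ℕ) (L : List ℤ), L.length ≤ N → Good k L →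
      ∃ t : PTree, t.arityLE k ∧ code t = L := by
  intro N
  induction N with
  | zero =>
    intro L hlen _
    have : L = [] := List.eq_nil_of_length_eq_zero (Nat.le_zero.1 hlen)
    subst this
    exact ⟨.node [], by rw [arity_node]; simp, code_nil⟩
  | succ N ih =>
    intro L hlen hGood
    obtain ⟨hNN, hsum, hstep⟩ := hGood
    rcases List.eq_nil_or_concat L with rfl | ⟨L', x, rfl⟩
    · exact ⟨.node [], by rw [arity_node]; simp, code_nil⟩
    rw [List.concat_eq_append] at *
    have hL'sum : 0 ≤ L'.sum := by
      have := hNN L'.length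
      rwa [List.take_append, Nat.sub_self, List.take_zero, List.append_nil,
        List.take_length] at this
    have hxval : x = -L'.sum := by
      rw [List.sum_append, List.sum_cons, List.sum_nil] at hsum
      omega
    obtain ⟨d, hd, hxd⟩ : ∃ d : ℕ, d ≤ k - 1 ∧ x = -(d : ℤ) := by
      rcases hstep x (by simp) with h1 | h2
      · rw [h1] at hxval; omega
      · exact h2
    have hdsum : L'.sum = (d : ℤ) := by omega
    have hL'NN : NN L' := NN_of_append_left hNN
    have hL'step : ∀ s ∈ L', s = 1 ∨ s ≤ 0 := by
      intro s hs
      rcases hstep s (by simp [hs]) with h1 | ⟨e, _, he⟩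
      · exact Or.inl h1
      · right; rw [he]; omega
    obtain ⟨Q, Qs, hQNN, hQsum, hQslen, hQsblocks, hLeq⟩ := decomp d L' hL'NN hL'step hdsum
    have hL'len : L'.length ≤ N := by
      rw [List.length_append] at hlen
      simp at hlen
      omega
    have hlenparts : Q.length + ((Qs.map fun R => (1:ℤ) :: R).flatten).length = L'.length := by
      rw [hLeq, List.length_append]
    -- Good of Q
    have hQgood : Good k Q := by
      refine ⟨hQNN, hQsum, fun s hs => hstep s ?_⟩
      simp [hLeq, hs]
    have hQlen : Q.length ≤ N := by omega
    obtain ⟨t0, ht0a, ht0c⟩ := ih Q hQlen hQgood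
    have hRtree : ∀ R ∈ Qs, ∃ t : PTree, t.arityLE k ∧ code t = R := by
      intro R hR
      have hmemR : ∀ s ∈ R, s ∈ L' := by
        intro s hs
        rw [hLeq]
        refine List.mem_append_right _ ?_
        exact List.mem_flatten.2 ⟨(1:ℤ) :: R, List.mem_map_of_mem hR, by simp [hs]⟩
      have h1 : ((Qs.map fun S => (1:ℤ) :: S).flatten).length
          = (Qs.map fun S => S.length + 1).sum := by
        rw [List.length_flatten, List.map_map]
        rfl
      have h2 : R.length + 1 ≤ (Qs.map fun S => S.length + 1).sum :=
        List.single_le_sum (by intro x _; omega) _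
          (List.mem_map_of_mem (f := fun S : List ℤ => S.length + 1) hR)
      have hRlenineq : R.length + 1 ≤ ((Qs.map fun S => (1:ℤ) :: S).flatten).length := by
        rw [h1]; exact h2
      refine ih R (by omega) ⟨(hQsblocks R hR).1, (hQsblocks R hR).2, fun s hs =>
        hstep s (by simp [hmemR s hs])⟩
    obtain ⟨us, huslen, husar, huscode⟩ := exists_trees Qs hRtree
    refine ⟨.node (t0 :: us), ?_, ?_⟩
    · rw [arity_node]
      constructor
      · simp only [List.length_cons, huslen, hQslen]
        omega
      · intro u hu
        rcases List.mem_cons.1 hu with rfl | hu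
        · exact ht0a
        · exact husar u hu
    · rw [code_cons, ht0c, huscode, huslen, hQslen, hLeq, hxd]

end KaryAux

namespace KaryAux

lemma MSOK_iff {k : ℕ} (s : ℤ) (c : ℕ) (h : ℤ) :
    MotzkinStepOK (k - 1) (fun _ => 1) (fun _ => 1) s c h ↔ c = 0 ∧ StepOK k s := by
  unfold MotzkinStepOK StepOK
  constructor
  · rintro (⟨hs, hc⟩ | ⟨d, hd, hs, hcond⟩)
    · exact ⟨hc, Or.inl hs⟩
    · refine ⟨?_, Or.inr ⟨d, hd, hs⟩⟩
      by_cases hdk : d = k - 1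
      · simpa [hdk] using hcond
      · simp only [hdk, if_false, ite_self, Nat.lt_one_iff] at hcond
        exact hcond
  · rintro ⟨hc, hs | ⟨d, hd, hs⟩⟩
    · exact Or.inl ⟨hs, hc⟩
    · refine Or.inr ⟨d, hd, hs, ?_⟩
      split
      · exact hc
      · simp [hc]

lemma mem_CMS {k n : ℕ} (P : List (ℤ × ℕ)) :
    P ∈ ColoredMotzkinSet (k - 1) (fun _ => 1) (fun _ => 1) n 0 ↔
      P.length = n ∧ (∀ p ∈ P, p.2 = 0) ∧ Good k (P.map Prod.fst) := by
  constructor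
  · rintro ⟨hlen, hsum, hcond⟩
    have hOK : ∀ i (hi : i < n), (P[i]'(by omega)).2 = 0 ∧ StepOK k (P[i]'(by omega)).1 := by
      intro i hi
      have h2 := (hcond i hi).2
      rw [List.getD_eq_getElem _ _ (by omega)] at h2
      exact (MSOK_iff _ _ _).1 h2
    refine ⟨hlen, ?_, ?_, by simpa using hsum, ?_⟩
    · intro p hp
      obtain ⟨i, hi, rfl⟩ := List.mem_iff_getElem.1 hp
      exact (hOK i (by omega)).1
    · intro m
      rcases m with _ | i
      · simp
      rcases lt_or_ge i n with hi | hi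
      · have := (hcond i hi).1
        rwa [List.map_take] at this
      · have hpm : (P.map Prod.fst).take (i + 1) = P.map Prod.fst := by
          apply List.take_of_length_le
          simp [hlen]; omega
        rw [hpm]
        rcases Nat.eq_zero_or_pos n with rfl | hn
        · have : P = [] := List.eq_nil_of_length_eq_zero hlen
          simp [this]
        · have := (hcond (n - 1) (by omega)).1
          rw [List.map_take] at this
          have hpm2 : (P.map Prod.fst).take ((n - 1) + 1) = P.map Prod.fst := by
            apply List.take_of_length_le
            simp [hlen]; omega
          rwa [hpm2] at this
    · intro s hs
      obtain ⟨p, hp, rfl⟩ := List.mem_map.1 hs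
      obtain ⟨i, hi, rfl⟩ := List.mem_iff_getElem.1 hp
      exact (hOK i (by omega)).2
  · rintro ⟨hlen, hsnd, hNN, hsum, hstep⟩
    refine ⟨hlen, by simpa using hsum, ?_⟩
    intro i hi
    have hiP : i < P.length := by omega
    constructor
    · rw [List.map_take]
      exact hNN _
    · rw [List.getD_eq_getElem _ _ hiP, MSOK_iff]
      refine ⟨hsnd _ (List.getElem_mem hiP), ?_⟩
      have : (P[i]).1 ∈ P.map Prod.fst := List.mem_map_of_mem (List.getElem_mem hiP)
      exact hstep _ this

lemma map_pair_fst (L : List ℤ) : (L.map fun s => (s, (0 : ℕ))).map Prod.fst = L := by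
  rw [List.map_map]
  exact List.map_id'' (fun _ => rfl) L

lemma pair_of_fst {P : List (ℤ × ℕ)} (h : ∀ p ∈ P, p.2 = 0) :
    (P.map Prod.fst).map (fun s => (s, (0 : ℕ))) = P := by
  induction P with
  | nil => rfl
  | cons p l ih =>
    simp only [List.map_cons, List.cons.injEq]
    refine ⟨?_, ih fun q hq => h q (List.mem_cons_of_mem _ hq)⟩
    have := h p (by simp)
    exact Prod.ext rfl this.symm

end KaryAux


/-- `k`-ary trees equinumerous with Motzkin paths. -/
theorem kary_trees_eq_motzkin (k : ℕ) (hk : 2 ≤ k) (n : ℕ) :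
    Nat.card {t : PTree // t.edges = n ∧ t.arityLE k} =
      M (k - 1) (fun _ => 1) (fun _ => 1) n 0 := by
  classical
  have hk1 : 1 ≤ k := by omega
  rw [M]
  have hmem : ∀ t : PTree, t.edges = n → t.arityLE k →
      (KaryAux.code t).map (fun s => (s, (0 : ℕ))) ∈
        ColoredMotzkinSet (k - 1) (fun _ => 1) (fun _ => 1) n 0 := by
    intro t hn ha
    rw [KaryAux.mem_CMS]
    refine ⟨by simp [KaryAux.code_length, hn], ?_, ?_⟩
    · intro p hp
      obtain ⟨s, _, rfl⟩ := List.mem_map.1 hp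
      rfl
    · rw [KaryAux.map_pair_fst]
      exact ⟨KaryAux.code_NN t, KaryAux.code_sum t, KaryAux.code_steps hk1 t ha⟩
  let F : {t : PTree // t.edges = n ∧ t.arityLE k} →
      (ColoredMotzkinSet (k - 1) (fun _ => 1) (fun _ => 1) n 0) :=
    fun t => ⟨(KaryAux.code t.1).map (fun s => (s, (0 : ℕ))), hmem t.1 t.2.1 t.2.2⟩
  have hbij : Function.Bijective F := by
    constructor
    · rintro ⟨t1, h1⟩ ⟨t2, h2⟩ h
      have h' := congrArg (fun (x : (ColoredMotzkinSet (k - 1) (fun _ => 1) (fun _ => 1) n 0)) =>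
        (x.1.map Prod.fst)) h
      simp only [F, KaryAux.map_pair_fst] at h'
      exact Subtype.ext (KaryAux.code_inj _ _ h')
    · rintro ⟨P, hP⟩
      rw [KaryAux.mem_CMS] at hP
      obtain ⟨hlen, hsnd, hGood⟩ := hP
      obtain ⟨t, ha, hc⟩ := KaryAux.code_surj hk1 (P.map Prod.fst).length (P.map Prod.fst)
        le_rfl hGood
      have hedge : t.edges = n := by
        rw [← KaryAux.code_length, hc]
        simp [hlen]
      refine ⟨⟨t, hedge, ha⟩, ?_⟩
      apply Subtype.ext
      simp only [F]
      rw [hc, KaryAux.pair_of_fst hsnd]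
  exact Nat.card_eq_of_bijective F hbij
end
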